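/- arXiv:2312.00893 — 4 statements merged into one kernel-verified Lean document; each statement's English description precedes it below -/
import Mathlib

section
/- Let X be a space. Then X has Property (T) if and only if there exist a controlled generating set E ⊆ X×X and a constant c > 0 such that for every representation π of ℂ_u[X] on a complex Hilbert space H and every ξ ∈ (H^π)^⊥, there is a partial translation v with supp(v) ⊆ E satisfying ‖π(v)ξ − π(vv*)ξ‖ ≥ c‖ξ‖. (That is, it suffices to verify the Kazhdan-type inequality for a single controlled generating set.) -/
open scoped ENNReal Classical

noncomputable section

namespace GeomPropT

variable {X : Type*}

/-- The tube of diameter `R` in `X × X`. -/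
def Tube (X : Type*) [EMetricSpace X] (R : ℝ≥0∞) : Set (X × X) :=
  {p : X × X | edist p.1 p.2 ≤ R}

/-- A subset of `X × X` is controlled if it is contained in a tube of finite diameter. -/
def Controlled [EMetricSpace X] (E : Set (X × X)) : Prop :=
  ∃ R : ℝ≥0∞, R < ⊤ ∧ E ⊆ Tube X R

/-- `X` has bounded geometry if balls of any given finite radius have uniformly
bounded cardinality. -/
def BoundedGeometry (X : Type*) [EMetricSpace X] : Prop :=
  ∀ R : ℝ≥0∞, R < ⊤ → ∃ N : ℕ, ∀ x : X,
    {y : X | edist x y ≤ R}.Finite ∧ {y : X | edist x y ≤ R}.ncard ≤ N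

/-- Composition of subsets of `X × X`. -/
def compRel (E F : Set (X × X)) : Set (X × X) :=
  {p : X × X | ∃ z : X, (p.1, z) ∈ E ∧ (z, p.2) ∈ F}

/-- `compPow E n` is the `(n+1)`-fold composition `E^{∘(n+1)}`. -/
def compPow (E : Set (X × X)) : ℕ → Set (X × X)
  | 0 => E
  | n + 1 => compRel E (compPow E n)

/-- A controlled set is generating if every controlled set is contained in some
iterated composition of it. -/
def Generating [EMetricSpace X] (E : Set (X × X)) : Prop :=
  Controlled E ∧ ∀ F : Set (X × X), Controlled F → ∃ n : ℕ, F ⊆ compPow E n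

/-- `X` is monogenic if it admits a controlled generating set. -/
def Monogenic (X : Type*) [EMetricSpace X] : Prop :=
  ∃ E : Set (X × X), Generating E

/-- A "space": bounded geometry, monogenic, with at most countably many coarse
components. -/
structure IsSpace (X : Type*) [EMetricSpace X] : Prop where
  boundedGeometry : BoundedGeometry X
  monogenic : Monogenic X
  countableComponents : Set.Countable {C : Set X | ∃ x : X, C = {y : X | edist x y < ⊤}}

/-- The support of a matrix. -/
def matSupport (T : X → X → ℂ) : Set (X × X) := {p : X × X | T p.1 p.2 ≠ 0}

/-- Membership in `ℂ_u[X]`: uniformly bounded entries and controlled support. -/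
def CuElem [EMetricSpace X] (T : X → X → ℂ) : Prop :=
  (∃ M : ℝ, ∀ x y : X, ‖T x y‖ ≤ M) ∧ Controlled (matSupport T)

/-- The identity matrix. -/
def matOne : X → X → ℂ := fun x y => if x = y then 1 else 0

/-- Matrix multiplication. -/
def matMul (T S : X → X → ℂ) : X → X → ℂ := fun x y => ∑' z : X, T x z * S z y

/-- Matrix adjoint. -/
def matStar (T : X → X → ℂ) : X → X → ℂ := fun x y => starRingEnd ℂ (T y x)

/-- Matrix powers. -/
def matPow (A : X → X → ℂ) : ℕ → X → X → ℂ
  | 0 => matOne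
  | n + 1 => matMul A (matPow A n)

/-- A function `f ∈ ℓ∞(X)` viewed as a diagonal matrix. -/
def diag (f : X → ℂ) : X → X → ℂ := fun x y => if x = y then f x else 0

/-- The matrix of a partial translation: a `{0,1}`-matrix with at most one `1` in
each row and each column, and controlled support. -/
def IsPartialTranslation [EMetricSpace X] (v : X → X → ℂ) : Prop :=
  (∀ x y : X, v x y = 0 ∨ v x y = 1) ∧
  (∀ x y y' : X, v x y = 1 → v x y' = 1 → y = y') ∧
  (∀ x x' y : X, v x y = 1 → v x' y = 1 → x = x') ∧
  Controlled (matSupport v)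

/-- Membership in `S_X`: finite propagation permutation matrices. -/
def IsPermMatrix [EMetricSpace X] (A : X → X → ℂ) : Prop :=
  (∀ x y : X, A x y = 0 ∨ A x y = 1) ∧
  (∀ x : X, ∃! y : X, A x y = 1) ∧
  (∀ y : X, ∃! x : X, A x y = 1) ∧
  Controlled (matSupport A)

/-- Membership in `A_X` with common row/column sum `c`. -/
def MemAX [EMetricSpace X] (A : X → X → ℂ) (c : ℂ) : Prop :=
  CuElem A ∧ ∀ x : X, HasSum (fun y => A x y) c ∧ HasSum (fun y => A y x) c

variable {H : Type*} [NormedAddCommGroup H] [InnerProductSpace ℂ H]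

/-- A representation of `ℂ_u[X]`: a unital `*`-homomorphism into `B(H)`. -/
structure IsRepresentation [EMetricSpace X] [CompleteSpace H]
    (π : (X → X → ℂ) → (H →L[ℂ] H)) : Prop where
  map_one : π matOne = 1
  map_add : ∀ T S : X → X → ℂ, CuElem T → CuElem S → π (T + S) = π T + π S
  map_smul : ∀ (c : ℂ) (T : X → X → ℂ), CuElem T → π (c • T) = c • π T
  map_mul : ∀ T S : X → X → ℂ, CuElem T → CuElem S → π (matMul T S) = π T * π S
  map_star : ∀ T : X → X → ℂ, CuElem T → π (matStar T) = ContinuousLinearMap.adjoint (π T)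

/-- The subspace `H^π` of invariant vectors. -/
def invariantSubmodule [EMetricSpace X] (π : (X → X → ℂ) → (H →L[ℂ] H)) :
    Submodule ℂ H where
  carrier := {ξ : H | ∀ v : X → X → ℂ, IsPartialTranslation v →
    π v ξ = π (matMul v (matStar v)) ξ}
  add_mem' := by
    intro a b ha hb v hv
    simp only [map_add, ha v hv, hb v hv]
  zero_mem' := by
    intro v hv
    simp
  smul_mem' := by
    intro c ξ hξ v hv
    simp only [map_smul, hξ v hv]

/-- `p` is the orthogonal projection onto `S`. -/
def IsOrthoProjOnto (p : H →L[ℂ] H) (S : Submodule ℂ H) : Prop :=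
  ∀ ξ : H, p ξ ∈ S ∧ ξ - p ξ ∈ Sᗮ

/-- Geometric Property (T). -/
def HasPropertyT (X : Type*) [EMetricSpace X] : Prop :=
  ∀ E : Set (X × X), Generating E →
    ∃ c : ℝ, 0 < c ∧
      ∀ (H : Type) [NormedAddCommGroup H] [InnerProductSpace ℂ H] [CompleteSpace H]
        (π : (X → X → ℂ) → (H →L[ℂ] H)), IsRepresentation π →
        ∀ ξ ∈ (invariantSubmodule π)ᗮ,
          ∃ v : X → X → ℂ, IsPartialTranslation v ∧ matSupport v ⊆ E ∧
            c * ‖ξ‖ ≤ ‖π v ξ - π (matMul v (matStar v)) ξ‖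

/-- Bounded functions (elements of `ℓ∞(X)`). -/
def BddFun (f : X → ℂ) : Prop := ∃ M : ℝ, ∀ x : X, ‖f x‖ ≤ M

/-- `f ∘ t`, extended by `0`, where `t` is the partial translation with matrix `v`. -/
def translateFun (v : X → X → ℂ) (f : X → ℂ) : X → ℂ := fun y => ∑' x : X, v x y * f x

/-- An invariant mean on `ℓ∞(X)`: a positive unital linear functional invariant
under partial translations. -/
def IsInvariantMean [EMetricSpace X] (φ : (X → ℂ) → ℂ) : Prop :=
  (∀ f g : X → ℂ, BddFun f → BddFun g → φ (f + g) = φ f + φ g) ∧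
  (∀ (c : ℂ) (f : X → ℂ), BddFun f → φ (c • f) = c * φ f) ∧
  φ (fun _ => 1) = 1 ∧
  (∀ f : X → ℂ, BddFun f → (∀ x, 0 ≤ (f x).re ∧ (f x).im = 0) →
    0 ≤ (φ f).re ∧ (φ f).im = 0) ∧
  (∀ f : X → ℂ, BddFun f → ∀ v : X → X → ℂ, IsPartialTranslation v →
    (∀ x : X, f x ≠ 0 → ∃ y : X, v x y = 1) → φ (translateFun v f) = φ f)

/-- `X` is amenable if `ℓ∞(X)` admits an invariant mean. -/
def IsAmenable (X : Type*) [EMetricSpace X] : Prop :=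
  ∃ φ : (X → ℂ) → ℂ, IsInvariantMean φ

/-- A representation of `ℂ_u[X]` bundled with its Hilbert space. -/
structure HilbertRep (X : Type*) [EMetricSpace X] where
  H : Type
  [nacg : NormedAddCommGroup H]
  [ips : InnerProductSpace ℂ H]
  [cs : CompleteSpace H]
  π : (X → X → ℂ) → (H →L[ℂ] H)
  rep : IsRepresentation π

attribute [instance] HilbertRep.nacg HilbertRep.ips HilbertRep.cs


/-! ### Auxiliary development -/
set_option linter.unusedSectionVars false

section AuxControlled

variable {X : Type*}

lemma Controlled.mono' [EMetricSpace X] {E F : Set (X × X)} (h : Controlled F) (hEF : E ⊆ F) :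
    Controlled E := by
  obtain ⟨R, hR, hsub⟩ := h
  exact ⟨R, hR, hEF.trans hsub⟩

lemma controlled_empty [EMetricSpace X] : Controlled (∅ : Set (X × X)) :=
  ⟨0, by simp, by simp⟩

lemma Controlled.compRel' [EMetricSpace X] {E F : Set (X × X)} (hE : Controlled E)
    (hF : Controlled F) : Controlled (compRel E F) := by
  obtain ⟨R, hR, hRs⟩ := hE
  obtain ⟨S, hS, hSs⟩ := hF
  refine ⟨R + S, ENNReal.add_lt_top.2 ⟨hR, hS⟩, ?_⟩
  rintro ⟨x, y⟩ ⟨z, h1, h2⟩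
  calc edist x y ≤ edist x z + edist z y := edist_triangle _ _ _
    _ ≤ R + S := add_le_add (hRs h1) (hSs h2)

lemma Controlled.compPow' [EMetricSpace X] {F : Set (X × X)} (hF : Controlled F) (n : ℕ) :
    Controlled (compPow F n) := by
  induction n with
  | zero => exact hF
  | succ n ih => exact hF.compRel' ih

lemma Controlled.transpose [EMetricSpace X] {E : Set (X × X)} (hE : Controlled E) :
    Controlled {p : X × X | (p.2, p.1) ∈ E} := by
  obtain ⟨R, hR, hRs⟩ := hE
  refine ⟨R, hR, ?_⟩
  rintro ⟨x, y⟩ hp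
  have h := hRs hp
  simpa only [Tube, Set.mem_setOf_eq, edist_comm] using h

lemma Controlled.union' [EMetricSpace X] {E F : Set (X × X)} (hE : Controlled E)
    (hF : Controlled F) : Controlled (E ∪ F) := by
  obtain ⟨R, hR, hRs⟩ := hE
  obtain ⟨S, hS, hSs⟩ := hF
  refine ⟨max R S, max_lt hR hS, ?_⟩
  rintro p (hp | hp)
  · exact le_trans (show edist p.1 p.2 ≤ R from hRs hp) (le_max_left _ _)
  · exact le_trans (show edist p.1 p.2 ≤ S from hSs hp) (le_max_right _ _)

end AuxControlled

section AuxSubPerm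

variable {X : Type*}

/-- A sub-permutation matrix: `{0,1}`-entries, at most one `1` per row and column. -/
def SubPerm (v : X → X → ℂ) : Prop :=
  (∀ x y : X, v x y = 0 ∨ v x y = 1) ∧
  (∀ x y y' : X, v x y = 1 → v x y' = 1 → y = y') ∧
  (∀ x x' y : X, v x y = 1 → v x' y = 1 → x = x')

lemma SubPerm.ne_zero_iff {v : X → X → ℂ} (hv : SubPerm v) {x y : X} :
    v x y ≠ 0 ↔ v x y = 1 := by
  rcases hv.1 x y with h | h <;> simp [h]

lemma IsPartialTranslation.subPerm [EMetricSpace X] {v : X → X → ℂ}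
    (hv : IsPartialTranslation v) : SubPerm v := ⟨hv.1, hv.2.1, hv.2.2.1⟩

lemma isPartialTranslation_of [EMetricSpace X] {v : X → X → ℂ} (h1 : SubPerm v)
    (h2 : Controlled (matSupport v)) : IsPartialTranslation v :=
  ⟨h1.1, h1.2.1, h1.2.2, h2⟩

lemma SubPerm.mul_apply {a b : X → X → ℂ} (ha : SubPerm a) (hb : SubPerm b) (x y : X) :
    matMul a b x y = if ∃ z, a x z = 1 ∧ b z y = 1 then 1 else 0 := by
  by_cases h : ∃ z, a x z = 1 ∧ b z y = 1
  · obtain ⟨z₀, hz1, hz2⟩ := h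
    rw [if_pos ⟨z₀, hz1, hz2⟩]
    have hzero : ∀ z, z ≠ z₀ → a x z * b z y = 0 := by
      intro z hz
      rcases ha.1 x z with h0 | h1
      · simp [h0]
      · exact absurd (ha.2.1 x z z₀ h1 hz1) hz
    show (∑' z : X, a x z * b z y) = 1
    rw [tsum_eq_single z₀ hzero, hz1, hz2, one_mul]
  · rw [if_neg h]
    have hzero : ∀ z, a x z * b z y = 0 := by
      intro z
      rcases ha.1 x z with h0 | h1
      · simp [h0]
      rcases hb.1 z y with g0 | g1
      · simp [g0]
      · exact absurd ⟨z, h1, g1⟩ h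
    show (∑' z : X, a x z * b z y) = 0
    rw [tsum_congr hzero, tsum_zero]

lemma SubPerm.mul_eq_one_iff {a b : X → X → ℂ} (ha : SubPerm a) (hb : SubPerm b) {x y : X} :
    matMul a b x y = 1 ↔ ∃ z, a x z = 1 ∧ b z y = 1 := by
  rw [ha.mul_apply hb]
  split
  · simpa
  · next h => simpa using h

lemma SubPerm.mul {a b : X → X → ℂ} (ha : SubPerm a) (hb : SubPerm b) :
    SubPerm (matMul a b) := by
  refine ⟨?_, ?_, ?_⟩
  · intro x y; rw [ha.mul_apply hb]; split <;> simp
  · intro x y y' h h'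
    rw [ha.mul_eq_one_iff hb] at h h'
    obtain ⟨z, hz1, hz2⟩ := h
    obtain ⟨z', hz1', hz2'⟩ := h'
    cases ha.2.1 x z z' hz1 hz1'
    exact hb.2.1 z y y' hz2 hz2'
  · intro x x' y h h'
    rw [ha.mul_eq_one_iff hb] at h h'
    obtain ⟨z, hz1, hz2⟩ := h
    obtain ⟨z', hz1', hz2'⟩ := h'
    cases hb.2.2 z z' y hz2 hz2'
    exact ha.2.2 x x' z hz1 hz1'

lemma SubPerm.star_apply {a : X → X → ℂ} (ha : SubPerm a) (x y : X) :
    matStar a x y = a y x := by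
  rcases ha.1 y x with h | h <;> simp [matStar, h]

lemma SubPerm.star {a : X → X → ℂ} (ha : SubPerm a) : SubPerm (matStar a) := by
  refine ⟨?_, ?_, ?_⟩
  · intro x y; rw [ha.star_apply]; exact ha.1 y x
  · intro x y y' h h'; rw [ha.star_apply] at h h'; exact ha.2.2 y y' x h h'
  · intro x x' y h h'; rw [ha.star_apply] at h h'; exact ha.2.1 y x x' h h'

lemma matStar_matStar (a : X → X → ℂ) : matStar (matStar a) = a := by
  funext x y
  simp [matStar]

lemma SubPerm.mul_star_mul {a : X → X → ℂ} (ha : SubPerm a) :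
    matMul (matMul a (matStar a)) a = a := by
  have has := ha.star
  have ham := ha.mul has
  funext x y
  rw [ham.mul_apply ha]
  rcases ha.1 x y with h | h
  · rw [h, if_neg]
    rintro ⟨z, hz1, hz2⟩
    rw [ha.mul_eq_one_iff has] at hz1
    obtain ⟨w, hw1, hw2⟩ := hz1
    rw [ha.star_apply] at hw2
    cases ha.2.2 x z w hw1 hw2
    exact zero_ne_one (h ▸ hz2)
  · rw [if_pos ⟨x, (ha.mul_eq_one_iff has).2 ⟨y, h, by rw [ha.star_apply]; exact h⟩, h⟩, h]

lemma key_identity {a b : X → X → ℂ} (ha : SubPerm a) (hb : SubPerm b) :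
    matMul a (matMul (matMul b (matStar b)) (matMul (matStar a) a)) =
      matMul a (matMul b (matStar b)) := by
  have has := ha.star
  have hbs := hb.star
  have hf : SubPerm (matMul b (matStar b)) := hb.mul hbs
  have he : SubPerm (matMul (matStar a) a) := has.mul ha
  have hfe : SubPerm (matMul (matMul b (matStar b)) (matMul (matStar a) a)) := hf.mul he
  funext x y
  rw [ha.mul_apply hfe, ha.mul_apply hf]
  congr 1
  apply propext
  constructor
  · rintro ⟨z, hz1, hz2⟩
    rw [hf.mul_eq_one_iff he] at hz2
    obtain ⟨w, hw1, hw2⟩ := hz2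
    have hwy : w = y := by
      rw [has.mul_eq_one_iff ha] at hw2
      obtain ⟨t, ht1, ht2⟩ := hw2
      rw [ha.star_apply] at ht1
      exact ha.2.1 t w y ht1 ht2
    exact ⟨z, hz1, hwy ▸ hw1⟩
  · rintro ⟨z, hz1, hz2⟩
    have hzy : z = y := by
      rw [hb.mul_eq_one_iff hbs] at hz2
      obtain ⟨u, hu1, hu2⟩ := hz2
      rw [hb.star_apply] at hu2
      exact hb.2.2 z y u hu1 hu2
    refine ⟨z, hz1, (hf.mul_eq_one_iff he).2 ⟨y, hzy ▸ hz2, ?_⟩⟩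
    refine (has.mul_eq_one_iff ha).2 ⟨x, ?_, hzy ▸ hz1⟩
    rw [ha.star_apply]
    exact hzy ▸ hz1

end AuxSubPerm

section AuxSupport

variable {X : Type*}

lemma matSupport_mul_subset {a b : X → X → ℂ} (ha : SubPerm a) (hb : SubPerm b) :
    matSupport (matMul a b) ⊆ compRel (matSupport a) (matSupport b) := by
  rintro ⟨x, y⟩ hxy
  have h : matMul a b x y = 1 := ((ha.mul hb).ne_zero_iff).1 hxy
  rw [ha.mul_eq_one_iff hb] at h
  obtain ⟨z, hz1, hz2⟩ := h
  exact ⟨z, by simp [matSupport, hz1], by simp [matSupport, hz2]⟩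

lemma matSupport_star (a : X → X → ℂ) :
    matSupport (matStar a) = {p : X × X | (p.2, p.1) ∈ matSupport a} := by
  ext ⟨x, y⟩
  simp [matSupport, matStar]

lemma SubPerm.abs_le_one {v : X → X → ℂ} (hv : SubPerm v) (x y : X) :
    ‖v x y‖ ≤ 1 := by
  rcases hv.1 x y with h | h <;> simp [h]

lemma matSupport_zero : matSupport (0 : X → X → ℂ) = ∅ := by
  ext ⟨x, y⟩
  simp [matSupport]

lemma cuElem_zero [EMetricSpace X] : CuElem (0 : X → X → ℂ) :=
  ⟨⟨0, fun x y => by simp⟩, by rw [matSupport_zero]; exact controlled_empty⟩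

lemma CuElem.add' [EMetricSpace X] {T S : X → X → ℂ} (hT : CuElem T) (hS : CuElem S) :
    CuElem (T + S) := by
  obtain ⟨⟨M, hM⟩, hTc⟩ := hT
  obtain ⟨⟨M', hM'⟩, hSc⟩ := hS
  refine ⟨⟨M + M', fun x y => ?_⟩, ?_⟩
  · calc ‖(T + S) x y‖ = ‖T x y + S x y‖ := by simp
      _ ≤ ‖T x y‖ + ‖S x y‖ := norm_add_le _ _
      _ ≤ M + M' := add_le_add (hM x y) (hM' x y)
  · refine (hTc.union' hSc).mono' ?_
    rintro ⟨x, y⟩ hxy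
    by_cases h : T x y = 0
    · right
      have : S x y ≠ 0 := by
        intro h'
        exact hxy (by simp only [Pi.add_apply, h, h', add_zero])
      exact this
    · exact Or.inl h

lemma subPerm_zero : SubPerm (0 : X → X → ℂ) :=
  ⟨fun x y => Or.inl rfl, fun x y y' h _ => by simp at h, fun x x' y h _ => by simp at h⟩

variable [EMetricSpace X]

lemma pt_zero : IsPartialTranslation (0 : X → X → ℂ) :=
  isPartialTranslation_of subPerm_zero (by rw [matSupport_zero]; exact controlled_empty)

lemma IsPartialTranslation.star {v : X → X → ℂ} (hv : IsPartialTranslation v) :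
    IsPartialTranslation (matStar v) :=
  isPartialTranslation_of hv.subPerm.star
    (by rw [matSupport_star]; exact hv.2.2.2.transpose)

lemma IsPartialTranslation.mul {a b : X → X → ℂ} (ha : IsPartialTranslation a)
    (hb : IsPartialTranslation b) : IsPartialTranslation (matMul a b) :=
  isPartialTranslation_of (ha.subPerm.mul hb.subPerm)
    ((ha.2.2.2.compRel' hb.2.2.2).mono' (matSupport_mul_subset ha.subPerm hb.subPerm))

lemma IsPartialTranslation.cu {v : X → X → ℂ} (hv : IsPartialTranslation v) : CuElem v :=
  ⟨⟨1, hv.subPerm.abs_le_one⟩, hv.2.2.2⟩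

lemma matMul_zero_zero : matMul (0 : X → X → ℂ) (matStar 0) = 0 := by
  funext x y
  show (∑' z : X, (0 : X → X → ℂ) x z * matStar 0 z y) = 0
  simp [matStar]

end AuxSupport

section AuxOperator

open ContinuousLinearMap

variable {X : Type*} [EMetricSpace X]
variable {H : Type*} [NormedAddCommGroup H] [InnerProductSpace ℂ H] [CompleteSpace H]
variable {π : (X → X → ℂ) → (H →L[ℂ] H)}

local notation "⟪" x ", " y "⟫" => @inner ℂ _ _ x y

lemma pi_zero (hπ : IsRepresentation π) : π 0 = 0 := by
  have h := hπ.map_add 0 0 cuElem_zero cuElem_zero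
  rw [add_zero] at h
  exact (left_eq_add.1 h)

lemma pt_triple (hπ : IsRepresentation π) {a : X → X → ℂ} (ha : IsPartialTranslation a) :
    π a * adjoint (π a) * π a = π a := by
  have has := ha.star
  have h1 := hπ.map_mul a (matStar a) ha.cu has.cu
  have h2 := hπ.map_mul (matMul a (matStar a)) a (ha.mul has).cu ha.cu
  rw [ha.subPerm.mul_star_mul, h1, hπ.map_star a ha.cu] at h2
  exact h2.symm

/-- A self-adjoint idempotent is a contraction. -/
lemma idem_sa_contraction {E : H →L[ℂ] H} (hsa : adjoint E = E) (hid : E * E = E) (η : H) :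
    ‖E η‖ ≤ ‖η‖ := by
  by_cases h0 : ‖E η‖ = 0
  · rw [h0]; exact norm_nonneg η
  have key : ‖E η‖ * ‖E η‖ ≤ ‖E η‖ * ‖η‖ := by
    have h1 : (‖E η‖ : ℝ) ^ 2 = RCLike.re ⟪E η, E η⟫ := (inner_self_eq_norm_sq (𝕜 := ℂ) (E η)).symm
    have h2 : ⟪E η, E η⟫ = ⟪E η, η⟫ := by
      calc ⟪E η, E η⟫ = ⟪adjoint E (E η), η⟫ := (adjoint_inner_left E η (E η)).symm
        _ = ⟪(E * E) η, η⟫ := by rw [hsa]; rw [ContinuousLinearMap.mul_apply]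
        _ = ⟪E η, η⟫ := by rw [hid]
    calc ‖E η‖ * ‖E η‖ = (‖E η‖ : ℝ) ^ 2 := (sq (‖E η‖)).symm
      _ = RCLike.re ⟪E η, η⟫ := by rw [h1, h2]
      _ ≤ ‖E η‖ * ‖η‖ := re_inner_le_norm (E η) η
  exact le_of_mul_le_mul_left key (lt_of_le_of_ne (norm_nonneg _) (Ne.symm h0))

lemma pt_contraction (hπ : IsRepresentation π) {a : X → X → ℂ}
    (ha : IsPartialTranslation a) (η : H) : ‖π a η‖ ≤ ‖η‖ := by
  set A := π a with hA
  have htriple : A * adjoint A * A = A := pt_triple hπ ha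
  set E := adjoint A * A with hE
  have hsa : adjoint E = E := by
    rw [hE, ← star_eq_adjoint, star_mul, star_eq_adjoint, star_eq_adjoint, adjoint_adjoint]
  have hid : E * E = E := by
    rw [hE]
    calc adjoint A * A * (adjoint A * A) = adjoint A * (A * adjoint A * A) := by
          simp only [mul_assoc]
      _ = adjoint A * A := by rw [htriple]
  have hnorm2 : (‖A η‖ : ℝ) ^ 2 ≤ ‖η‖ ^ 2 := by
    have h1 : (‖A η‖ : ℝ) ^ 2 = RCLike.re ⟪E η, η⟫ := by
      rw [← inner_self_eq_norm_sq (𝕜 := ℂ) (A η)]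
      congr 1
      calc ⟪A η, A η⟫ = ⟪adjoint A (A η), η⟫ := (adjoint_inner_left A η (A η)).symm
        _ = ⟪E η, η⟫ := by rw [hE, ContinuousLinearMap.mul_apply]
    calc (‖A η‖ : ℝ) ^ 2 = RCLike.re ⟪E η, η⟫ := h1
      _ ≤ ‖E η‖ * ‖η‖ := re_inner_le_norm (E η) η
      _ ≤ ‖η‖ * ‖η‖ :=
          mul_le_mul_of_nonneg_right (idem_sa_contraction hsa hid η) (norm_nonneg η)
      _ = ‖η‖ ^ 2 := (sq (‖η‖)).symm
  exact le_of_pow_le_pow_left₀ two_ne_zero (norm_nonneg η) hnorm2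

/-- The defect vector. -/
def Dvec (π : (X → X → ℂ) → (H →L[ℂ] H)) (ξ : H) (w : X → X → ℂ) : H :=
  π w ξ - π (matMul w (matStar w)) ξ

lemma Dvec_eq (hπ : IsRepresentation π) {a : X → X → ℂ} (ha : IsPartialTranslation a)
    (ξ : H) : Dvec π ξ a = π a ξ - (π a * adjoint (π a)) ξ := by
  rw [Dvec, hπ.map_mul a (matStar a) ha.cu ha.star.cu, hπ.map_star a ha.cu]

lemma Dvec_zero (hπ : IsRepresentation π) (ξ : H) : Dvec π ξ 0 = 0 := by
  rw [Dvec, matMul_zero_zero, pi_zero hπ]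
  simp

lemma norm_D_formula {A : H →L[ℂ] H} (hA : A * adjoint A * A = A) (ξ : H) :
    ‖A ξ - (A * adjoint A) ξ‖ ^ 2 =
      RCLike.re ⟪(adjoint A * A) ξ, ξ⟫ + RCLike.re ⟪(A * adjoint A) ξ, ξ⟫
        - 2 * RCLike.re ⟪A ξ, ξ⟫ := by
  have hAv : ∀ η : H, (A * adjoint A) η = A (adjoint A η) := fun η => rfl
  have T1 : ⟪A ξ, A ξ⟫ = ⟪(adjoint A * A) ξ, ξ⟫ := by
    rw [ContinuousLinearMap.mul_apply]
    exact (adjoint_inner_left A ξ (A ξ)).symm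
  have T2 : ⟪A ξ, (A * adjoint A) ξ⟫ = ⟪A ξ, ξ⟫ := by
    rw [ContinuousLinearMap.mul_apply]
    calc ⟪A ξ, A (adjoint A ξ)⟫ = ⟪adjoint A (A ξ), adjoint A ξ⟫ :=
          (adjoint_inner_left A (adjoint A ξ) (A ξ)).symm
      _ = ⟪A (adjoint A (A ξ)), ξ⟫ := adjoint_inner_right A (adjoint A (A ξ)) ξ
      _ = ⟪(A * adjoint A * A) ξ, ξ⟫ := by rw [ContinuousLinearMap.mul_apply,
            ContinuousLinearMap.mul_apply]
      _ = ⟪A ξ, ξ⟫ := by rw [hA]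
  have T3 : RCLike.re ⟪(A * adjoint A) ξ, A ξ⟫ = RCLike.re ⟪A ξ, ξ⟫ := by
    have := inner_conj_symm (𝕜 := ℂ) (A ξ) ((A * adjoint A) ξ)
    rw [T2] at this
    rw [← this, RCLike.conj_re]
  have T4 : ⟪(A * adjoint A) ξ, (A * adjoint A) ξ⟫ = ⟪(A * adjoint A) ξ, ξ⟫ := by
    rw [hAv]
    calc ⟪A (adjoint A ξ), A (adjoint A ξ)⟫
        = ⟪adjoint A (A (adjoint A ξ)), adjoint A ξ⟫ :=
          (adjoint_inner_left A (adjoint A ξ) (A (adjoint A ξ))).symm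
      _ = ⟪A (adjoint A (A (adjoint A ξ))), ξ⟫ :=
          adjoint_inner_right A (adjoint A (A (adjoint A ξ))) ξ
      _ = ⟪(A * adjoint A * A) (adjoint A ξ), ξ⟫ := by
          rw [ContinuousLinearMap.mul_apply, ContinuousLinearMap.mul_apply]
      _ = ⟪A (adjoint A ξ), ξ⟫ := by rw [hA]
      _ = ⟪(A * adjoint A) ξ, ξ⟫ := by rw [hAv]
  have expand : ⟪A ξ - (A * adjoint A) ξ, A ξ - (A * adjoint A) ξ⟫ =
      ⟪A ξ, A ξ⟫ - ⟪A ξ, (A * adjoint A) ξ⟫ - ⟪(A * adjoint A) ξ, A ξ⟫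
        + ⟪(A * adjoint A) ξ, (A * adjoint A) ξ⟫ := by
    rw [inner_sub_left, inner_sub_right, inner_sub_right]
    ring
  rw [← inner_self_eq_norm_sq (𝕜 := ℂ) (A ξ - (A * adjoint A) ξ), expand]
  rw [map_add, map_sub, map_sub]
  rw [T1, T4]
  have hT2re : RCLike.re ⟪A ξ, (A * adjoint A) ξ⟫ = RCLike.re ⟪A ξ, ξ⟫ := by rw [T2]
  rw [hT2re, T3]
  ring

lemma Dvec_star_norm (hπ : IsRepresentation π) {a : X → X → ℂ}
    (ha : IsPartialTranslation a) (ξ : H) :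
    ‖Dvec π ξ (matStar a)‖ = ‖Dvec π ξ a‖ := by
  set A := π a with hA
  have htriple : A * adjoint A * A = A := pt_triple hπ ha
  have htriple' : adjoint A * adjoint (adjoint A) * adjoint A = adjoint A := by
    have h6 := congrArg star htriple
    rw [star_mul, star_mul] at h6
    simp only [star_eq_adjoint, adjoint_adjoint] at h6 ⊢
    rw [mul_assoc]
    exact h6
  have hDa : Dvec π ξ a = A ξ - (A * adjoint A) ξ := Dvec_eq hπ ha ξ
  have hDas : Dvec π ξ (matStar a) = adjoint A ξ - (adjoint A * A) ξ := by
    rw [Dvec_eq hπ ha.star ξ, hπ.map_star a ha.cu, adjoint_adjoint]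
  have h1 := norm_D_formula htriple ξ
  have h2 := norm_D_formula htriple' ξ
  rw [adjoint_adjoint] at h2
  have hre : RCLike.re ⟪adjoint A ξ, ξ⟫ = RCLike.re ⟪A ξ, ξ⟫ := by
    have h3 : ⟪adjoint A ξ, ξ⟫ = ⟪ξ, A ξ⟫ := adjoint_inner_left A ξ ξ
    have h4 : ⟪ξ, A ξ⟫ = (starRingEnd ℂ) ⟪A ξ, ξ⟫ := (inner_conj_symm ξ (A ξ)).symm
    rw [h3, h4, RCLike.conj_re]
  have hsq : ‖Dvec π ξ (matStar a)‖ ^ 2 = ‖Dvec π ξ a‖ ^ 2 := by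
    rw [hDa, hDas, h1, h2, hre]
    ring
  exact (pow_left_inj₀ (norm_nonneg _) (norm_nonneg _) two_ne_zero).mp hsq

end AuxOperator

section AuxOperator2

open ContinuousLinearMap

variable {X : Type*} [EMetricSpace X]
variable {H : Type*} [NormedAddCommGroup H] [InnerProductSpace ℂ H] [CompleteSpace H]
variable {π : (X → X → ℂ) → (H →L[ℂ] H)}

lemma matStar_sum {ι : Type*} (s : Finset ι) (f : ι → X → X → ℂ) :
    matStar (∑ i ∈ s, f i) = ∑ i ∈ s, matStar (f i) := by
  funext x y
  simp only [matStar, Finset.sum_apply, map_sum]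

lemma CuElem.star' {T : X → X → ℂ} (hT : CuElem T) : CuElem (matStar T) := by
  obtain ⟨⟨M, hM⟩, hTc⟩ := hT
  refine ⟨⟨M, fun x y => ?_⟩, ?_⟩
  · simpa [matStar] using hM y x
  · rw [matSupport_star]
    exact hTc.transpose

lemma cu_sum {ι : Type*} (s : Finset ι) (f : ι → X → X → ℂ) (h : ∀ i ∈ s, CuElem (f i)) :
    CuElem (∑ i ∈ s, f i) := by
  classical
  induction s using Finset.induction_on with
  | empty => simpa using cuElem_zero
  | @insert i s his ih =>
      rw [Finset.sum_insert his]
      exact (h _ (Finset.mem_insert_self _ _)).add'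
        (ih fun j hj => h j (Finset.mem_insert_of_mem hj))

lemma pi_sum (hπ : IsRepresentation π) {ι : Type*} (s : Finset ι) (f : ι → X → X → ℂ)
    (h : ∀ i ∈ s, CuElem (f i)) : π (∑ i ∈ s, f i) = ∑ i ∈ s, π (f i) := by
  classical
  induction s using Finset.induction_on with
  | empty => simpa using pi_zero hπ
  | @insert i s his ih =>
      rw [Finset.sum_insert his, Finset.sum_insert his,
        hπ.map_add _ _ (h _ (Finset.mem_insert_self _ _))
          (cu_sum s f fun j hj => h j (Finset.mem_insert_of_mem hj)),
        ih fun j hj => h j (Finset.mem_insert_of_mem hj)]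

lemma Dvec_mul_le (hπ : IsRepresentation π) {a b : X → X → ℂ}
    (ha : IsPartialTranslation a) (hb : IsPartialTranslation b) (ξ : H) :
    ‖Dvec π ξ (matMul a b)‖ ≤ ‖Dvec π ξ a‖ + ‖Dvec π ξ b‖ := by
  have has := ha.star
  have hbs := hb.star
  have hab := ha.mul hb
  set A := π a with hAdef
  set B := π b with hBdef
  have hπab : π (matMul a b) = A * B := hπ.map_mul a b ha.cu hb.cu
  have hBs : π (matStar b) = adjoint B := hπ.map_star b hb.cu
  have hAs : π (matStar a) = adjoint A := hπ.map_star a ha.cu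
  have hf : π (matMul b (matStar b)) = B * adjoint B := by
    rw [hπ.map_mul b (matStar b) hb.cu hbs.cu, hBs]
  have he : π (matMul (matStar a) a) = adjoint A * A := by
    rw [hπ.map_mul (matStar a) a has.cu ha.cu, hAs]
  have hfe : π (matMul (matMul b (matStar b)) (matMul (matStar a) a))
      = (B * adjoint B) * (adjoint A * A) := by
    rw [hπ.map_mul _ _ (hb.mul hbs).cu (has.mul ha).cu, hf, he]
  have hkey : A * ((B * adjoint B) * (adjoint A * A)) = A * (B * adjoint B) := by
    have h1 := hπ.map_mul a (matMul (matMul b (matStar b)) (matMul (matStar a) a))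
      ha.cu ((hb.mul hbs).mul (has.mul ha)).cu
    rw [key_identity ha.subPerm hb.subPerm,
      hπ.map_mul a (matMul b (matStar b)) ha.cu (hb.mul hbs).cu, hf, hfe] at h1
    exact h1.symm
  have hDas : Dvec π ξ (matStar a) = adjoint A ξ - (adjoint A * A) ξ := by
    rw [Dvec_eq hπ has ξ, hAs, adjoint_adjoint]
  have hadj : adjoint (A * B) = adjoint B * adjoint A := by
    rw [← star_eq_adjoint, star_mul, star_eq_adjoint, star_eq_adjoint]
  have hD : Dvec π ξ (matMul a b)
      = A (Dvec π ξ b) - A ((B * adjoint B) (Dvec π ξ (matStar a))) := by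
    rw [Dvec_eq hπ hab ξ, Dvec_eq hπ hb ξ, hπab, hDas, hadj]
    have hkeyξ : A (B (adjoint B (adjoint A (A ξ)))) = A (B (adjoint B ξ)) := by
      have h2 := congrArg (fun T : H →L[ℂ] H => T ξ) hkey
      simpa only [ContinuousLinearMap.mul_apply] using h2
    simp only [ContinuousLinearMap.mul_apply, map_sub]
    rw [hkeyξ]
    abel
  rw [hD]
  have step : ‖A (Dvec π ξ b) - A ((B * adjoint B) (Dvec π ξ (matStar a)))‖
      ≤ ‖Dvec π ξ b‖ + ‖Dvec π ξ (matStar a)‖ := by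
    refine le_trans (norm_sub_le _ _) (add_le_add (pt_contraction hπ ha _) ?_)
    have s1 : ‖A ((B * adjoint B) (Dvec π ξ (matStar a)))‖
        ≤ ‖(B * adjoint B) (Dvec π ξ (matStar a))‖ := pt_contraction hπ ha _
    have s2 : ‖(B * adjoint B) (Dvec π ξ (matStar a))‖
        ≤ ‖adjoint B (Dvec π ξ (matStar a))‖ := by
      rw [ContinuousLinearMap.mul_apply]
      exact pt_contraction hπ hb _
    have s3 : ‖adjoint B (Dvec π ξ (matStar a))‖ ≤ ‖Dvec π ξ (matStar a)‖ := by
      rw [← hBs]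
      exact pt_contraction hπ hbs _
    exact le_trans s1 (le_trans s2 s3)
  rw [Dvec_star_norm hπ ha ξ] at step
  linarith [step]

lemma Dvec_sum (hπ : IsRepresentation π) {m : ℕ} {w : ℕ → X → X → ℂ}
    (hw : ∀ j, IsPartialTranslation (w j))
    (hcross : ∀ j k, j ≠ k → matMul (w j) (matStar (w k)) = 0) (ξ : H) :
    Dvec π ξ (∑ j ∈ Finset.range m, w j) = ∑ j ∈ Finset.range m, Dvec π ξ (w j) := by
  have hv : CuElem (∑ j ∈ Finset.range m, w j) :=
    cu_sum _ _ (fun j _ => (hw j).cu)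
  have hvs : CuElem (matStar (∑ j ∈ Finset.range m, w j)) := hv.star'
  rw [Dvec, hπ.map_mul _ _ hv hvs, hπ.map_star _ hv,
    pi_sum hπ _ _ (fun j _ => (hw j).cu)]
  have hadj : adjoint (∑ j ∈ Finset.range m, π (w j))
      = ∑ j ∈ Finset.range m, adjoint (π (w j)) := by
    rw [← star_eq_adjoint, star_sum]
    exact Finset.sum_congr rfl fun j _ => star_eq_adjoint _
  rw [hadj]
  have hcrossop : ∀ j k, j ≠ k → (π (w j)) (adjoint (π (w k)) ξ) = 0 := by
    intro j k hjk
    have h1 := hπ.map_mul (w j) (matStar (w k)) (hw j).cu (hw k).star.cu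
    rw [hcross j k hjk, pi_zero hπ] at h1
    have h2 := congrArg (fun T : H →L[ℂ] H => T ξ) h1.symm
    simpa only [ContinuousLinearMap.mul_apply, hπ.map_star (w k) (hw k).cu,
      ContinuousLinearMap.zero_apply] using h2
  rw [ContinuousLinearMap.mul_apply]
  simp only [ContinuousLinearMap.sum_apply]
  have hinner : ∀ j ∈ Finset.range m,
      (π (w j)) (∑ k ∈ Finset.range m, adjoint (π (w k)) ξ)
        = (π (w j)) (adjoint (π (w j)) ξ) := by
    intro j hj
    rw [map_sum]
    exact Finset.sum_eq_single_of_mem j hj fun k _ hkj => hcrossop j k (Ne.symm hkj)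
  rw [Finset.sum_congr rfl hinner, ← Finset.sum_sub_distrib]
  refine Finset.sum_congr rfl fun j _ => ?_
  rw [Dvec_eq hπ (hw j) ξ, ContinuousLinearMap.mul_apply]

end AuxOperator2

section AuxDecomp
set_option linter.unusedSectionVars false

variable {X : Type*} [EMetricSpace X]

/-- The domain predicate for the decomposition. -/
def Pprop (v : X → X → ℂ) (F C : Set (X × X)) (y : X) : Prop :=
  ∃ x z, v x y = 1 ∧ (x, z) ∈ F ∧ (z, y) ∈ C

noncomputable def txf (v : X → X → ℂ) (F C : Set (X × X)) (y : X) : X :=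
  if h : Pprop v F C y then h.choose else y

noncomputable def zff (v : X → X → ℂ) (F C : Set (X × X)) (y : X) : X :=
  if h : Pprop v F C y then h.choose_spec.choose else y

lemma txf_spec {v : X → X → ℂ} {F C : Set (X × X)} {y : X} (h : Pprop v F C y) :
    v (txf v F C y) y = 1 ∧ (txf v F C y, zff v F C y) ∈ F ∧ (zff v F C y, y) ∈ C := by
  rw [txf, zff, dif_pos h, dif_pos h]
  exact h.choose_spec.choose_spec

noncomputable def rkf [LinearOrder X] (v : X → X → ℂ) (F C : Set (X × X)) (y : X) : ℕ :=
  {y' : X | (Pprop v F C y' ∧ zff v F C y' = zff v F C y) ∧ y' < y}.ncard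

noncomputable def wpc [LinearOrder X] (v : X → X → ℂ) (F C : Set (X × X)) (j : ℕ) :
    X → X → ℂ := fun x y =>
  if Pprop v F C y ∧ rkf v F C y = j ∧ txf v F C y = x then 1 else 0

noncomputable def apc [LinearOrder X] (v : X → X → ℂ) (F C : Set (X × X)) (j : ℕ) :
    X → X → ℂ := fun x y =>
  if ∃ y', Pprop v F C y' ∧ rkf v F C y' = j ∧ zff v F C y' = y ∧ txf v F C y' = x
    then 1 else 0

noncomputable def bpc [LinearOrder X] (v : X → X → ℂ) (F C : Set (X × X)) (j : ℕ) :
    X → X → ℂ := fun x y =>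
  if Pprop v F C y ∧ rkf v F C y = j ∧ zff v F C y = x then 1 else 0


lemma ite_eq_one_iff_c {c : Prop} [Decidable c] : (if c then (1 : ℂ) else 0) = 1 ↔ c := by
  constructor
  · intro h
    by_contra hc
    rw [if_neg hc] at h
    exact zero_ne_one h
  · intro h
    rw [if_pos h]

lemma wpc_eq_one_iff [LinearOrder X] {v : X → X → ℂ} {F C : Set (X × X)} {j : ℕ} {x y : X} :
    wpc v F C j x y = 1 ↔ Pprop v F C y ∧ rkf v F C y = j ∧ txf v F C y = x := by
  unfold wpc; exact ite_eq_one_iff_c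

lemma apc_eq_one_iff [LinearOrder X] {v : X → X → ℂ} {F C : Set (X × X)} {j : ℕ} {x y : X} :
    apc v F C j x y = 1 ↔
      ∃ y', Pprop v F C y' ∧ rkf v F C y' = j ∧ zff v F C y' = y ∧ txf v F C y' = x := by
  unfold apc; exact ite_eq_one_iff_c

lemma bpc_eq_one_iff [LinearOrder X] {v : X → X → ℂ} {F C : Set (X × X)} {j : ℕ} {x y : X} :
    bpc v F C j x y = 1 ↔ Pprop v F C y ∧ rkf v F C y = j ∧ zff v F C y = x := by
  unfold bpc; exact ite_eq_one_iff_c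

lemma wpc_01 [LinearOrder X] (v : X → X → ℂ) (F C : Set (X × X)) (j : ℕ) (x y : X) :
    wpc v F C j x y = 0 ∨ wpc v F C j x y = 1 := by
  unfold wpc; split
  · exact Or.inr rfl
  · exact Or.inl rfl

lemma apc_01 [LinearOrder X] (v : X → X → ℂ) (F C : Set (X × X)) (j : ℕ) (x y : X) :
    apc v F C j x y = 0 ∨ apc v F C j x y = 1 := by
  unfold apc; split
  · exact Or.inr rfl
  · exact Or.inl rfl

lemma bpc_01 [LinearOrder X] (v : X → X → ℂ) (F C : Set (X × X)) (j : ℕ) (x y : X) :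
    bpc v F C j x y = 0 ∨ bpc v F C j x y = 1 := by
  unfold bpc; split
  · exact Or.inr rfl
  · exact Or.inl rfl

lemma decomposition [LinearOrder X] (hBG : BoundedGeometry X) {F C : Set (X × X)}
    (hF : Controlled F) (hC : Controlled C) :
    ∃ N : ℕ, ∀ v : X → X → ℂ, IsPartialTranslation v → matSupport v ⊆ compRel F C →
      ∃ w : ℕ → X → X → ℂ,
        (∀ j, ∃ a b : X → X → ℂ, IsPartialTranslation a ∧ matSupport a ⊆ F ∧
           IsPartialTranslation b ∧ matSupport b ⊆ C ∧ w j = matMul a b) ∧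
        (∀ j, IsPartialTranslation (w j)) ∧
        v = ∑ j ∈ Finset.range N, w j ∧
        (∀ j k, j ≠ k → matMul (w j) (matStar (w k)) = 0) := by
  obtain ⟨R, hRtop, hRs⟩ := hC
  obtain ⟨N, hN⟩ := hBG R hRtop
  refine ⟨N, ?_⟩
  intro v hv hsupp
  -- basic facts
  have hPv : ∀ {x y : X}, v x y = 1 → Pprop v F C y := by
    intro x y h
    have hmem : (x, y) ∈ matSupport v := by
      simp only [matSupport, Set.mem_setOf_eq, h]
      exact one_ne_zero
    obtain ⟨z, h1, h2⟩ := hsupp hmem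
    exact ⟨x, z, h, h1, h2⟩
  have htx_eq : ∀ {x y : X}, v x y = 1 → txf v F C y = x := by
    intro x y h
    exact hv.2.2.1 _ _ _ (txf_spec (hPv h)).1 h
  -- fibers
  have hfib : ∀ y : X, ({y' : X | Pprop v F C y' ∧ zff v F C y' = zff v F C y}).Finite ∧
      ({y' : X | Pprop v F C y' ∧ zff v F C y' = zff v F C y}).ncard ≤ N := by
    intro y
    have hsub : {y' : X | Pprop v F C y' ∧ zff v F C y' = zff v F C y}
        ⊆ {y' : X | edist (zff v F C y) y' ≤ R} := by
      rintro y' ⟨hy', hz⟩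
      have h2 : (zff v F C y', y') ∈ C := (txf_spec hy').2.2
      have h3 : edist (zff v F C y') y' ≤ R := hRs h2
      rw [hz] at h3
      exact h3
    exact ⟨(hN (zff v F C y)).1.subset hsub,
      le_trans (Set.ncard_le_ncard hsub (hN (zff v F C y)).1) (hN (zff v F C y)).2⟩
  have hrk_lt : ∀ y : X, Pprop v F C y → rkf v F C y < N := by
    intro y hy
    have hss : {y' : X | (Pprop v F C y' ∧ zff v F C y' = zff v F C y) ∧ y' < y}
        ⊂ {y' : X | Pprop v F C y' ∧ zff v F C y' = zff v F C y} := by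
      constructor
      · rintro y' ⟨h1, _⟩; exact h1
      · intro hcontra
        have := hcontra ⟨hy, rfl⟩
        exact lt_irrefl y this.2
    exact lt_of_lt_of_le (Set.ncard_lt_ncard hss (hfib y).1) (hfib y).2
  have hrk_mono : ∀ y y' : X, Pprop v F C y → Pprop v F C y' →
      zff v F C y = zff v F C y' → y < y' → rkf v F C y < rkf v F C y' := by
    intro y y' hy hy' hzz hlt
    apply Set.ncard_lt_ncard
    · constructor
      · rintro y'' ⟨⟨h1, h2⟩, h3⟩
        exact ⟨⟨h1, h2.trans hzz⟩, h3.trans hlt⟩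
      · intro hcontra
        have := hcontra ⟨⟨hy, hzz⟩, hlt⟩
        exact lt_irrefl y this.2
    · exact ((hfib y').1.subset (by rintro y'' ⟨h1, _⟩; exact h1))
  have hrk_inj : ∀ y y' : X, Pprop v F C y → Pprop v F C y' →
      zff v F C y = zff v F C y' → rkf v F C y = rkf v F C y' → y = y' := by
    intro y y' hy hy' hzz hrr
    rcases lt_trichotomy y y' with h | h | h
    · exact absurd hrr (Nat.ne_of_lt (hrk_mono y y' hy hy' hzz h))
    · exact h
    · exact absurd hrr.symm (Nat.ne_of_lt (hrk_mono y' y hy' hy hzz.symm h))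
  -- entries equal one, characterizations
  have hapt : ∀ j, SubPerm (apc v F C j) := by
    intro j
    refine ⟨apc_01 v F C j, ?_, ?_⟩
    · intro x y y2 h1 h2
      rw [apc_eq_one_iff] at h1 h2
      obtain ⟨y1', hP1, hr1, hz1, ht1⟩ := h1
      obtain ⟨y2', hP2, hr2, hz2, ht2⟩ := h2
      have hv1 : v x y1' = 1 := by rw [← ht1]; exact (txf_spec hP1).1
      have hv2 : v x y2' = 1 := by rw [← ht2]; exact (txf_spec hP2).1
      have : y1' = y2' := hv.2.1 x y1' y2' hv1 hv2
      rw [← hz1, ← hz2, this]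
    · intro x x2 y h1 h2
      rw [apc_eq_one_iff] at h1 h2
      obtain ⟨y1', hP1, hr1, hz1, ht1⟩ := h1
      obtain ⟨y2', hP2, hr2, hz2, ht2⟩ := h2
      have : y1' = y2' := hrk_inj y1' y2' hP1 hP2 (hz1.trans hz2.symm) (hr1.trans hr2.symm)
      rw [← ht1, ← ht2, this]
  have hbpt : ∀ j, SubPerm (bpc v F C j) := by
    intro j
    refine ⟨bpc_01 v F C j, ?_, ?_⟩
    · intro x y y2 h1 h2
      rw [bpc_eq_one_iff] at h1 h2
      exact hrk_inj y y2 h1.1 h2.1 (h1.2.2.trans h2.2.2.symm) (h1.2.1.trans h2.2.1.symm)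
    · intro x x2 y h1 h2
      rw [bpc_eq_one_iff] at h1 h2
      rw [← h1.2.2, ← h2.2.2]
  have haC : ∀ j, matSupport (apc v F C j) ⊆ F := by
    rintro j ⟨x, y⟩ hxy
    have h1 : apc v F C j x y = 1 := by
      rcases apc_01 v F C j x y with h | h
      · exact absurd h hxy
      · exact h
    rw [apc_eq_one_iff] at h1
    obtain ⟨y', hP, hr, hz, ht⟩ := h1
    have := (txf_spec hP).2.1
    rwa [ht, hz] at this
  have hbC : ∀ j, matSupport (bpc v F C j) ⊆ C := by
    rintro j ⟨x, y⟩ hxy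
    have h1 : bpc v F C j x y = 1 := by
      rcases bpc_01 v F C j x y with h | h
      · exact absurd h hxy
      · exact h
    rw [bpc_eq_one_iff] at h1
    have := (txf_spec h1.1).2.2
    rwa [h1.2.2] at this
  have hwfac : ∀ j, wpc v F C j = matMul (apc v F C j) (bpc v F C j) := by
    intro j
    funext x y
    rw [(hapt j).mul_apply (hbpt j)]
    unfold wpc
    have hiff : (Pprop v F C y ∧ rkf v F C y = j ∧ txf v F C y = x) ↔
        (∃ z, apc v F C j x z = 1 ∧ bpc v F C j z y = 1) := by
      constructor
      · rintro ⟨hP, hr, ht⟩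
        refine ⟨zff v F C y, ?_, ?_⟩
        · rw [apc_eq_one_iff]
          exact ⟨y, hP, hr, rfl, ht⟩
        · rw [bpc_eq_one_iff]
          exact ⟨hP, hr, rfl⟩
      · rintro ⟨z, ha1, hb1⟩
        rw [apc_eq_one_iff] at ha1
        rw [bpc_eq_one_iff] at hb1
        obtain ⟨y', hP', hr', hz', ht'⟩ := ha1
        have : y' = y := hrk_inj y' y hP' hb1.1 (hz'.trans hb1.2.2.symm)
          (hr'.trans hb1.2.1.symm)
        exact ⟨hb1.1, hb1.2.1, by rw [← this]; exact ht'⟩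
    rw [if_congr hiff rfl rfl]
  have hwpt : ∀ j, IsPartialTranslation (wpc v F C j) := by
    intro j
    refine isPartialTranslation_of ⟨wpc_01 v F C j, ?_, ?_⟩ ?_
    · intro x y y2 h1 h2
      rw [wpc_eq_one_iff] at h1 h2
      have hv1 : v x y = 1 := by rw [← h1.2.2]; exact (txf_spec h1.1).1
      have hv2 : v x y2 = 1 := by rw [← h2.2.2]; exact (txf_spec h2.1).1
      exact hv.2.1 x y y2 hv1 hv2
    · intro x x2 y h1 h2
      rw [wpc_eq_one_iff] at h1 h2
      rw [← h1.2.2, ← h2.2.2]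
    · refine hv.2.2.2.mono' ?_
      rintro ⟨x, y⟩ hxy
      have h1 : wpc v F C j x y = 1 := by
        rcases wpc_01 v F C j x y with h | h
        · exact absurd h hxy
        · exact h
      rw [wpc_eq_one_iff] at h1
      have hv1 : v x y = 1 := by rw [← h1.2.2]; exact (txf_spec h1.1).1
      simp only [matSupport, Set.mem_setOf_eq, hv1]
      exact one_ne_zero
  -- the pieces
  refine ⟨wpc v F C, ?_, hwpt, ?_, ?_⟩
  · intro j
    refine ⟨apc v F C j, bpc v F C j, ?_, haC j, ?_, hbC j, hwfac j⟩
    · exact isPartialTranslation_of (hapt j) (hF.mono' (haC j))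
    · exact isPartialTranslation_of (hbpt j) (Controlled.mono' ⟨R, hRtop, hRs⟩ (hbC j))
  · -- v equals the sum of the pieces
    funext x y
    simp only [Finset.sum_apply]
    rcases hv.1 x y with h0 | h1
    · rw [h0]
      refine (Finset.sum_eq_zero ?_).symm
      intro j _
      rcases wpc_01 v F C j x y with h | h
      · exact h
      · exfalso
        rw [wpc_eq_one_iff] at h
        have hv1 : v x y = 1 := by rw [← h.2.2]; exact (txf_spec h.1).1
        rw [h0] at hv1
        exact zero_ne_one hv1
    · have hP := hPv h1
      rw [h1]
      have hsum : ∑ j ∈ Finset.range N, wpc v F C j x y = wpc v F C (rkf v F C y) x y := by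
        refine Finset.sum_eq_single_of_mem (rkf v F C y)
          (Finset.mem_range.2 (hrk_lt y hP)) ?_
        intro j _ hj
        rcases wpc_01 v F C j x y with h | h
        · exact h
        · exfalso
          rw [wpc_eq_one_iff] at h
          exact hj h.2.1.symm
      rw [hsum, wpc_eq_one_iff.2 ⟨hP, rfl, htx_eq h1⟩]
  · -- cross terms vanish
    intro j k hjk
    funext x y
    show (∑' z : X, wpc v F C j x z * matStar (wpc v F C k) z y) = 0
    have hzero : ∀ z : X, wpc v F C j x z * matStar (wpc v F C k) z y = 0 := by
      intro z
      rcases wpc_01 v F C j x z with h | h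
      · rw [h, zero_mul]
      · rcases wpc_01 v F C k y z with g | g
        · rw [(hwpt k).subPerm.star_apply, g, mul_zero]
        · exfalso
          rw [wpc_eq_one_iff] at h g
          exact hjk (h.2.1.symm.trans g.2.1)
    rw [tsum_congr hzero, tsum_zero]

end AuxDecomp

section Main

open ContinuousLinearMap

variable {X : Type*} [EMetricSpace X]

lemma lemmaB [LinearOrder X] (hBG : BoundedGeometry X) {F : Set (X × X)}
    (hF : Controlled F) :
    ∀ n : ℕ, ∃ K : ℝ, 0 < K ∧
      ∀ (H : Type) [NormedAddCommGroup H] [InnerProductSpace ℂ H] [CompleteSpace H]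
        (π : (X → X → ℂ) → (H →L[ℂ] H)), IsRepresentation π →
        ∀ (ξ : H) (ε : ℝ), 0 ≤ ε →
        (∀ w : X → X → ℂ, IsPartialTranslation w → matSupport w ⊆ F →
          ‖Dvec π ξ w‖ ≤ ε) →
        ∀ v : X → X → ℂ, IsPartialTranslation v → matSupport v ⊆ compPow F n →
          ‖Dvec π ξ v‖ ≤ K * ε := by
  intro n
  induction n with
  | zero =>
      refine ⟨1, one_pos, ?_⟩
      intro H _ _ _ π hπ ξ ε hε hsmall v hv hs
      rw [one_mul]
      exact hsmall v hv hs
  | succ n ih =>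
      obtain ⟨K, hK, hKp⟩ := ih
      obtain ⟨N, hN⟩ := decomposition hBG hF (hF.compPow' n)
      refine ⟨(N : ℝ) * (1 + K) + 1, by positivity, ?_⟩
      intro H _ _ _ π hπ ξ ε hε hsmall v hv hs
      obtain ⟨w, hfac, hwpt, hsum, hcross⟩ := hN v hv hs
      have hDsum : Dvec π ξ v = ∑ j ∈ Finset.range N, Dvec π ξ (w j) := by
        rw [hsum]
        exact Dvec_sum hπ hwpt hcross ξ
      rw [hDsum]
      have hterm : ∀ j ∈ Finset.range N, ‖Dvec π ξ (w j)‖ ≤ (1 + K) * ε := by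
        intro j _
        obtain ⟨a, b, hapt, haF, hbpt, hbC, hwab⟩ := hfac j
        rw [hwab]
        calc ‖Dvec π ξ (matMul a b)‖ ≤ ‖Dvec π ξ a‖ + ‖Dvec π ξ b‖ :=
              Dvec_mul_le hπ hapt hbpt ξ
          _ ≤ ε + K * ε := add_le_add (hsmall a hapt haF)
              (hKp H π hπ ξ ε hε hsmall b hbpt hbC)
          _ = (1 + K) * ε := by ring
      calc ‖∑ j ∈ Finset.range N, Dvec π ξ (w j)‖
          ≤ ∑ j ∈ Finset.range N, ‖Dvec π ξ (w j)‖ := norm_sum_le _ _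
        _ ≤ ∑ j ∈ Finset.range N, (1 + K) * ε := Finset.sum_le_sum hterm
        _ = (N : ℝ) * ((1 + K) * ε) := by
            rw [Finset.sum_const, Finset.card_range, nsmul_eq_mul]
        _ ≤ ((N : ℝ) * (1 + K) + 1) * ε := by
            nlinarith [Nat.cast_nonneg (α := ℝ) N, hε, hK]

end Main

/-- `X` has Property (T) iff the Kazhdan-type inequality holds for
a single controlled generating set. -/
theorem statement8 {X : Type*} [EMetricSpace X] (hX : IsSpace X) :
    HasPropertyT X ↔
      ∃ E : Set (X × X), Generating E ∧
        ∃ c : ℝ, 0 < c ∧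
          ∀ (H : Type) [NormedAddCommGroup H] [InnerProductSpace ℂ H] [CompleteSpace H]
            (π : (X → X → ℂ) → (H →L[ℂ] H)), IsRepresentation π →
            ∀ ξ ∈ (invariantSubmodule π)ᗮ,
              ∃ v : X → X → ℂ, IsPartialTranslation v ∧ matSupport v ⊆ E ∧
                c * ‖ξ‖ ≤ ‖π v ξ - π (matMul v (matStar v)) ξ‖ := by
  constructor
  · intro hT
    obtain ⟨E, hE⟩ := hX.monogenic
    obtain ⟨c, hc, hA⟩ := hT E hE
    exact ⟨E, hE, c, hc, hA⟩
  · rintro ⟨E, hE, c, hc, hA⟩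
    intro F hF
    letI : LinearOrder X := IsWellOrder.linearOrder WellOrderingRel
    obtain ⟨n, hEsub⟩ := hF.2 E hE.1
    obtain ⟨K, hK, hKp⟩ := lemmaB hX.boundedGeometry hF.1 n
    refine ⟨c / (2 * K), div_pos hc (mul_pos two_pos hK), ?_⟩
    intro H _ _ _ π hπ ξ hξ
    by_cases hξ0 : ξ = 0
    · refine ⟨0, pt_zero, ?_, ?_⟩
      · rw [matSupport_zero]
        exact Set.empty_subset F
      · rw [hξ0]
        have h0 : c / (2 * K) * ‖(0 : H)‖ = 0 := by rw [norm_zero, mul_zero]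
        rw [h0]
        exact norm_nonneg _
    · by_contra hcon
      push_neg at hcon
      have hsmall : ∀ w : X → X → ℂ, IsPartialTranslation w → matSupport w ⊆ F →
          ‖Dvec π ξ w‖ ≤ c / (2 * K) * ‖ξ‖ := by
        intro w h1 h2
        exact le_of_lt (hcon w h1 h2)
      obtain ⟨v, hvpt, hvE, hvineq⟩ := hA H π hπ ξ hξ
      have hbound : ‖Dvec π ξ v‖ ≤ K * (c / (2 * K) * ‖ξ‖) :=
        hKp H π hπ ξ _ (le_of_lt (mul_pos (div_pos hc (mul_pos two_pos hK))
          (norm_pos_iff.2 hξ0))) hsmall v hvpt (hvE.trans hEsub)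
      have hDv : Dvec π ξ v = π v ξ - π (matMul v (matStar v)) ξ := rfl
      rw [hDv] at hbound
      have hξpos : 0 < ‖ξ‖ := norm_pos_iff.2 hξ0
      have hKne : K ≠ 0 := ne_of_gt hK
      have heq : K * (c / (2 * K) * ‖ξ‖) = c / 2 * ‖ξ‖ := by
        field_simp
      rw [heq] at hbound
      have hfinal := le_trans hvineq hbound
      nlinarith [hfinal, hc, hξpos]

end GeomPropT
end
end

section
/- Let d be a natural number and let G = (V,E) be a countably infinite simple graph in which every vertex has degree at most d. Then there exists a proper edge colouring of G with d+1 colours, i.e. a map c : E → {1,…,d+1} such that c(e_1) ≠ c(e_2) whenever e_1 and e_2 are distinct edges sharing a vertex. -/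
open scoped ENNReal Classical

noncomputable section

namespace GeomPropT

variable {X : Type*}

variable {H : Type*} [NormedAddCommGroup H] [InnerProductSpace ℂ H]

namespace VZ

variable {V : Type*}

/-- Two paths from a vertex, entered via an edge from `x`, in a graph where each vertex has
at most one neighbour besides a given one, have comparable supports. -/
lemma prefix_of_paths {H : SimpleGraph V}
    (h2 : ∀ a u w w', H.Adj a u → H.Adj a w → H.Adj a w' → w ≠ u → w' ≠ u → w = w') :
    ∀ {a y : V} (p : H.Walk a y), ∀ {x z : V} (q : H.Walk a z), H.Adj x a →
      p.IsPath → q.IsPath → x ∉ p.support → x ∉ q.support →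
      p.support <+: q.support ∨ q.support <+: p.support := by
  intro a y p
  induction p with
  | nil =>
    intro x z q _ _ _ _ _
    left
    rw [SimpleGraph.Walk.support_nil, q.support_eq_cons]
    exact ⟨_, rfl⟩
  | @cons a b y hab p ih =>
    intro x z q hxa hp hq hxp hxq
    cases q with
    | nil =>
      right
      rw [SimpleGraph.Walk.support_nil, (SimpleGraph.Walk.cons hab p).support_eq_cons]
      exact ⟨_, rfl⟩
    | @cons _ b' _ hab' q' =>
      rw [SimpleGraph.Walk.support_cons] at hxp hxq
      have hbx : b ≠ x := by
        intro h; exact hxp (by simp [SimpleGraph.Walk.support_cons, ← h,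
          SimpleGraph.Walk.start_mem_support])
      have hb'x : b' ≠ x := by
        intro h; exact hxq (by simp [SimpleGraph.Walk.support_cons, ← h,
          SimpleGraph.Walk.start_mem_support])
      have hbb' : b = b' := h2 a x b b' hxa.symm hab hab' hbx hb'x
      subst hbb'
      rw [SimpleGraph.Walk.cons_isPath_iff] at hp hq
      have := ih (x := a) q' hab hp.1 hq.1 hp.2 hq.2
      simp only [SimpleGraph.Walk.support_cons, List.cons_prefix_cons]
      tauto

lemma prefix_of_paths_start {H : SimpleGraph V} {x : V}
    (h2 : ∀ a u w w', H.Adj a u → H.Adj a w → H.Adj a w' → w ≠ u → w' ≠ u → w = w')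
    (h1 : ∀ w w', H.Adj x w → H.Adj x w' → w = w') :
    ∀ {y z : V} (p : H.Walk x y) (q : H.Walk x z), p.IsPath → q.IsPath →
      p.support <+: q.support ∨ q.support <+: p.support := by
  intro y z p q hp hq
  cases p with
  | nil =>
    left; rw [SimpleGraph.Walk.support_nil, q.support_eq_cons]; exact ⟨_, rfl⟩
  | @cons _ b _ hxb p' =>
    cases q with
    | nil =>
      right; rw [SimpleGraph.Walk.support_nil,
        (SimpleGraph.Walk.cons hxb p').support_eq_cons]; exact ⟨_, rfl⟩
    | @cons _ b' _ hxb' q' =>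
      have hbb' : b = b' := h1 b b' hxb hxb'
      subst hbb'
      rw [SimpleGraph.Walk.cons_isPath_iff] at hp hq
      have := prefix_of_paths h2 p' q' hxb hp.1 hq.1 hp.2 hq.2
      simp only [SimpleGraph.Walk.support_cons, List.cons_prefix_cons]
      tauto

/-- An interior vertex of a path has two distinct neighbours. -/
lemma interior_two_nbrs {H : SimpleGraph V} {x y z : V} (q : H.Walk x z) (hq : q.IsPath)
    (hy : y ∈ q.support) (hyx : y ≠ x) (hyz : y ≠ z) :
    ∃ m n, m ≠ n ∧ H.Adj y m ∧ H.Adj y n := by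
  classical
  have hspec := q.take_spec hy
  have hsup : q.support = (q.takeUntil y hy).support ++ (q.dropUntil y hy).support.tail := by
    rw [← SimpleGraph.Walk.support_append, hspec]
  obtain ⟨n, hn, qd', hqd⟩ := SimpleGraph.Walk.exists_eq_cons_of_ne hyz (q.dropUntil y hy)
  obtain ⟨m, hm, qt', hqt⟩ := SimpleGraph.Walk.exists_eq_cons_of_ne hyx (q.takeUntil y hy).reverse
  refine ⟨m, n, ?_, hm, hn⟩
  have hmmem : m ∈ (q.takeUntil y hy).support := by
    have : m ∈ (q.takeUntil y hy).reverse.support := by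
      rw [hqt, SimpleGraph.Walk.support_cons]
      simp [SimpleGraph.Walk.start_mem_support]
    rwa [SimpleGraph.Walk.support_reverse, List.mem_reverse] at this
  have hnmem : n ∈ (q.dropUntil y hy).support.tail := by
    rw [hqd, SimpleGraph.Walk.support_cons]
    simp [SimpleGraph.Walk.start_mem_support]
  have hnd : q.support.Nodup := hq.support_nodup
  rw [hsup] at hnd
  have := List.disjoint_of_nodup_append hnd
  intro hmn
  exact this hmmem (hmn ▸ hnmem)

/-- In a graph of max degree two, a vertex with at most one neighbour cannot reach two
distinct vertices which also have at most one neighbour. -/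
lemma no_three_pendant {H : SimpleGraph V} {x y z : V}
    (h2 : ∀ a u w w', H.Adj a u → H.Adj a w → H.Adj a w' → w ≠ u → w' ≠ u → w = w')
    (h1x : ∀ w w', H.Adj x w → H.Adj x w' → w = w')
    (h1y : ∀ w w', H.Adj y w → H.Adj y w' → w = w')
    (h1z : ∀ w w', H.Adj z w → H.Adj z w' → w = w')
    (hxy : x ≠ y) (hxz : x ≠ z) (hyz : y ≠ z)
    (hry : H.Reachable x y) (hrz : H.Reachable x z) : False := by
  classical
  obtain ⟨p0⟩ := hry
  obtain ⟨q0⟩ := hrz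
  set p := p0.bypass with hpdef
  set q := q0.bypass with hqdef
  have hp : p.IsPath := p0.bypass_isPath
  have hq : q.IsPath := q0.bypass_isPath
  have key : ∀ {y' z' : V} (p' : H.Walk x y') (q' : H.Walk x z'), p'.IsPath → q'.IsPath →
      y' ≠ x → y' ≠ z' → (∀ w w', H.Adj y' w → H.Adj y' w' → w = w') →
      p'.support <+: q'.support → False := by
    intro y' z' p' q' hp' hq' hyx' hyz' h1y' hpre
    have hymem : y' ∈ q'.support := hpre.subset (p'.end_mem_support)
    obtain ⟨m, n, hmn, ham, han⟩ := interior_two_nbrs q' hq' hymem hyx' hyz'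
    exact hmn (h1y' m n ham han)
  rcases prefix_of_paths_start h2 h1x p q hp hq with h | h
  · exact key p q hp hq (Ne.symm hxy) hyz h1y h
  · exact key q p hq hp (Ne.symm hxz) (Ne.symm hyz) h1z h


variable {G : SimpleGraph V} {d : ℕ} {s : Finset (Sym2 V)}

abbrev Col (V : Type*) (d : ℕ) := Sym2 V → Option (Fin (d + 1))

def Good (G : SimpleGraph V) (s : Finset (Sym2 V)) (c : Col V d) : Prop :=
  (∀ e, c e ≠ none → e ∈ s) ∧
  ∀ ⦃u v w : V⦄ ⦃γ : Fin (d + 1)⦄, c s(u, v) = some γ → c s(u, w) = some γ → v = w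

def Free (c : Col V d) (x : V) (γ : Fin (d + 1)) : Prop := ∀ y, c s(x, y) ≠ some γ

lemma Good.adj (hs : ↑s ⊆ G.edgeSet) {c : Col V d} (hG : Good G s c) {u v : V}
    (h : c s(u, v) ≠ none) : G.Adj u v := hs (hG.1 _ h)

lemma exists_free (hs : ↑s ⊆ G.edgeSet)
    (hdeg : ∀ v : V, {w : V | G.Adj v w}.Finite ∧ {w : V | G.Adj v w}.ncard ≤ d)
    {c : Col V d} (hG : Good G s c) (x : V) : ∃ γ, Free c x γ := by
  by_contra h
  push_neg at h
  have h' : ∀ γ : Fin (d + 1), ∃ y, c s(x, y) = some γ := by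
    intro γ
    have := h γ
    simp only [Free, not_forall, not_not] at this
    exact this
  choose f hf using h'
  have hinj : Function.Injective f := by
    intro γ₁ γ₂ hEq
    have : c s(x, f γ₁) = some γ₂ := by rw [hEq]; exact hf γ₂
    have := (hf γ₁).symm.trans this
    exact Option.some_injective _ this
  have hmem : ∀ γ, f γ ∈ (hdeg x).1.toFinset := by
    intro γ
    rw [Set.Finite.mem_toFinset]
    exact hG.adj hs (by rw [hf γ]; simp)
  have hcard : (Finset.univ.image f).card ≤ (hdeg x).1.toFinset.card := by
    apply Finset.card_le_card
    intro y hy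
    simp only [Finset.mem_image] at hy
    obtain ⟨γ, _, rfl⟩ := hy
    exact hmem γ
  rw [Finset.card_image_of_injective _ hinj, Finset.card_univ, Fintype.card_fin] at hcard
  have h2 : (hdeg x).1.toFinset.card = {w : V | G.Adj x w}.ncard :=
    (Set.ncard_eq_toFinset_card _ (hdeg x).1).symm
  rw [h2] at hcard
  have := (hdeg x).2
  omega

lemma good_update (hs : ↑s ⊆ G.edgeSet) {c : Col V d} (hG : Good G s c) {x y : V}
    (hxy : s(x, y) ∈ s) {γ : Fin (d + 1)}
    (hfx : Free c x γ) (hfy : Free c y γ) :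
    Good G s (Function.update c s(x, y) (some γ)) := by
  constructor
  · intro e he
    by_cases h : e = s(x, y)
    · exact h ▸ hxy
    · rw [Function.update_of_ne h] at he
      exact hG.1 e he
  · intro u v w δ h1 h2
    by_cases e1 : s(u, v) = s(x, y) <;> by_cases e2 : s(u, w) = s(x, y)
    · rw [← e2] at e1
      exact Sym2.congr_right.mp e1
    · rw [e1, Function.update_self] at h1
      rw [Function.update_of_ne e2] at h2
      obtain ⟨rfl, rfl⟩ | ⟨rfl, rfl⟩ := Sym2.eq_iff.mp e1
      · exact absurd h2 (by injection h1 with h1; rw [h1] at hfx; exact hfx w)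
      · exact absurd h2 (by injection h1 with h1; rw [h1] at hfy; exact hfy w)
    · rw [e2, Function.update_self] at h2
      rw [Function.update_of_ne e1] at h1
      obtain ⟨rfl, rfl⟩ | ⟨rfl, rfl⟩ := Sym2.eq_iff.mp e2
      · exact absurd h1 (by injection h2 with h2; rw [h2] at hfx; exact hfx v)
      · exact absurd h1 (by injection h2 with h2; rw [h2] at hfy; exact hfy v)
    · rw [Function.update_of_ne e1] at h1
      rw [Function.update_of_ne e2] at h2
      exact hG.2 h1 h2


section Swap
variable (α β : Fin (d + 1))

def flipc (γ : Fin (d + 1)) : Fin (d + 1) := if γ = α then β else if γ = β then α else γ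

lemma flipc_flipc (γ) : flipc α β (flipc α β γ) = γ := by
  unfold flipc; split_ifs <;> simp_all
lemma flipc_inj {γ δ} (h : flipc α β γ = flipc α β δ) : γ = δ := by
  have := congrArg (flipc α β) h
  rwa [flipc_flipc, flipc_flipc] at this
lemma flipc_eq_self {γ} (h1 : γ ≠ α) (h2 : γ ≠ β) : flipc α β γ = γ := by
  unfold flipc; split_ifs <;> simp_all
lemma flipc_beta : flipc α β β = α := by
  unfold flipc; split_ifs <;> simp_all

noncomputable def swapC (c : Col V d) (R : Set V) : Col V d := fun e =>
  if ∃ u ∈ R, u ∈ e then (c e).map (flipc α β) else c e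

variable {α β}

def Closed (α β : Fin (d + 1)) (c : Col V d) (R : Set V) : Prop :=
  ∀ u v, u ∈ R → (c s(u, v) = some α ∨ c s(u, v) = some β) → v ∈ R

lemma swapC_eq_none_iff {c : Col V d} {R : Set V} {e} :
    swapC α β c R e = none ↔ c e = none := by
  unfold swapC; split_ifs <;> simp

/-- Edges with an endpoint not in `R` (whenever they matter) keep their value:
any edge containing a vertex `x ∉ R` is unchanged. -/
lemma swapC_eq_of_not_mem {c : Col V d} {R : Set V} (hcl : Closed α β c R) {x w : V}
    (hx : x ∉ R) : swapC α β c R s(x, w) = c s(x, w) := by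
  unfold swapC
  split_ifs with h
  · obtain ⟨u, hu, hue⟩ := h
    rw [Sym2.mem_iff] at hue
    rcases h' : c s(x, w) with _ | γ
    · simp
    · by_cases hγ : γ = α ∨ γ = β
      · exfalso
        rcases hue with rfl | rfl
        · exact hx hu
        · apply hx
          apply hcl u x hu
          rw [Sym2.eq_swap]
          rcases hγ with rfl | rfl
          · left; exact h'
          · right; exact h'
      · push_neg at hγ
        simp [flipc_eq_self _ _ hγ.1 hγ.2]
  · rfl

lemma swapC_free_of_not_mem {c : Col V d} {R : Set V} (hcl : Closed α β c R) {x : V}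
    (hx : x ∉ R) {γ} (hf : Free c x γ) : Free (swapC α β c R) x γ := by
  intro y
  rw [swapC_eq_of_not_mem hcl hx]
  exact hf y

/-- Colours other than α, β are preserved as free colours. -/
lemma swapC_free_other {c : Col V d} {R : Set V} {x : V} {γ}
    (hγa : γ ≠ α) (hγb : γ ≠ β) (hf : Free c x γ) : Free (swapC α β c R) x γ := by
  intro y
  unfold swapC
  split_ifs with h
  · rcases h' : c s(x, y) with _ | δ
    · simp
    · simp only [h', Option.map_some]
      intro hcon
      injection hcon with hcon
      have hδ : δ ≠ α ∧ δ ≠ β := by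
        constructor <;> rintro rfl <;> unfold flipc at hcon <;> simp_all
      rw [flipc_eq_self _ _ hδ.1 hδ.2] at hcon
      exact hf y (by rw [h', hcon])
  · exact hf y

/-- If `w ∈ R` and β is free at `w` in `c`, then α is free at `w` after the swap. -/
lemma swapC_free_alpha {c : Col V d} {R : Set V} (hcl : Closed α β c R) {w : V} (hw : w ∈ R)
    (hαβ : α ≠ β) (hf : Free c w β) : Free (swapC α β c R) w α := by
  intro y
  unfold swapC
  split_ifs with h
  · rcases h' : c s(w, y) with _ | δ
    · simp
    · simp only [h', Option.map_some]
      intro hcon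
      injection hcon with hcon
      have : δ = β := by
        by_contra hδβ
        by_cases hδα : δ = α
        · subst hδα; unfold flipc at hcon; simp at hcon; exact hαβ hcon.symm
        · rw [flipc_eq_self _ _ hδα hδβ] at hcon; exact hδα hcon
      exact hf y (by rw [h', this])
  · intro hcon
    exact h ⟨w, hw, by simp⟩

lemma swapC_good (hs : ↑s ⊆ G.edgeSet) {c : Col V d} (hG : Good G s c) {R : Set V}
    (hcl : Closed α β c R) : Good G s (swapC α β c R) := by
  have hmem : ∀ (u v : V) (δ : Fin (d+1)), c s(u,v) = some δ → (δ = α ∨ δ = β) → u ∈ R →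
      v ∈ R := by
    intro u v δ h hδ hu
    apply hcl u v hu
    rcases hδ with rfl | rfl
    · left; exact h
    · right; exact h
  have hboth : ∀ (u v : V) (δ : Fin (d+1)), c s(u,v) = some δ → (δ = α ∨ δ = β) →
      (∃ z ∈ R, z ∈ s(u,v)) → u ∈ R ∧ v ∈ R := by
    intro u v δ h hδ ⟨z, hz, hze⟩
    rw [Sym2.mem_iff] at hze
    rcases hze with rfl | rfl
    · exact ⟨hz, hmem _ _ _ h hδ hz⟩
    · refine ⟨hmem z u δ (by rwa [Sym2.eq_swap]) hδ hz, hz⟩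
  constructor
  · intro e he
    rw [Ne, swapC_eq_none_iff] at he
    exact hG.1 e he
  · intro u v w γ h1 h2
    unfold swapC at h1 h2
    split_ifs at h1 h2 with hs1 hs2 hs2
    · -- both swapped
      rcases hv : c s(u,v) with _ | δ₁ <;> rw [hv] at h1
      · simp at h1
      rcases hw : c s(u,w) with _ | δ₂ <;> rw [hw] at h2
      · simp at h2
      simp only [Option.map_some] at h1 h2
      injection h1 with h1; injection h2 with h2
      have : δ₁ = δ₂ := flipc_inj _ _ (h1.trans h2.symm)
      exact hG.2 hv (this ▸ hw)
    · -- e₁ swapped, e₂ not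
      rcases hv : c s(u,v) with _ | δ <;> rw [hv] at h1
      · simp at h1
      simp only [Option.map_some] at h1
      injection h1 with h1
      by_cases hδ : δ = α ∨ δ = β
      · exfalso
        have huR : u ∈ R := (hboth u v δ hv hδ hs1).1
        have hγ : γ = α ∨ γ = β := by
          rcases hδ with rfl | rfl
          · right; rw [← h1]; unfold flipc; simp
          · left; rw [← h1, flipc_beta]
        exact hs2 ⟨u, huR, by simp⟩
      · push_neg at hδ
        rw [flipc_eq_self _ _ hδ.1 hδ.2] at h1
        exact hG.2 (h1 ▸ hv) h2
    · -- e₂ swapped, e₁ not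
      rcases hw : c s(u,w) with _ | δ <;> rw [hw] at h2
      · simp at h2
      simp only [Option.map_some] at h2
      injection h2 with h2
      by_cases hδ : δ = α ∨ δ = β
      · exfalso
        have huR : u ∈ R := (hboth u w δ hw hδ hs2).1
        exact hs1 ⟨u, huR, by simp⟩
      · push_neg at hδ
        rw [flipc_eq_self _ _ hδ.1 hδ.2] at h2
        exact hG.2 h1 (h2 ▸ hw)
    · exact hG.2 h1 h2

end Swap

section ABGraph

def abGraph (c : Col V d) (α β : Fin (d + 1)) : SimpleGraph V where
  Adj u v := u ≠ v ∧ (c s(u, v) = some α ∨ c s(u, v) = some β)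
  symm := by
    exact ⟨fun u v ⟨h1, h2⟩ => ⟨h1.symm, by rwa [Sym2.eq_swap]⟩⟩
  loopless := ⟨fun u h => h.1 rfl⟩

lemma abGraph_closed {c : Col V d} {α β : Fin (d+1)} (hs : ↑s ⊆ G.edgeSet)
    (hG : Good G s c) (w : V) :
    Closed α β c {v | (abGraph c α β).Reachable w v} := by
  intro u v hu hcol
  have hne : u ≠ v := by
    have := hG.adj hs (c := c) (u := u) (v := v) (by rcases hcol with h | h <;> simp [h])
    exact this.ne
  exact hu.trans (SimpleGraph.Adj.reachable ⟨hne, hcol⟩)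

/-- If α is free at a vertex, it has at most one neighbour in the α/β-graph. -/
lemma abGraph_subsingleton {c : Col V d} {α β : Fin (d+1)} (hG : Good G s c) {x : V}
    (hf : Free c x α) : ∀ w w', (abGraph c α β).Adj x w → (abGraph c α β).Adj x w' →
      w = w' := by
  rintro w w' ⟨_, hw⟩ ⟨_, hw'⟩
  rcases hw with hw | hw
  · exact absurd hw (hf w)
  rcases hw' with hw' | hw'
  · exact absurd hw' (hf w')
  exact hG.2 hw hw'

/-- The α/β-graph has max degree 2 (in subsingleton form). -/
lemma abGraph_two {c : Col V d} {α β : Fin (d+1)} (hG : Good G s c) :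
    ∀ a u w w', (abGraph c α β).Adj a u → (abGraph c α β).Adj a w →
      (abGraph c α β).Adj a w' → w ≠ u → w' ≠ u → w = w' := by
  rintro a u w w' ⟨_, hu⟩ ⟨_, hw⟩ ⟨_, hw'⟩ hwu hw'u
  rcases hw with hw | hw <;> rcases hw' with hw' | hw'
  · exact hG.2 hw hw'
  · rcases hu with hu | hu
    · exact absurd (hG.2 hw hu) hwu
    · exact absurd (hG.2 hw' hu) hw'u
  · rcases hu with hu | hu
    · exact absurd (hG.2 hw' hu) hw'u
    · exact absurd (hG.2 hw hu) hwu
  · exact hG.2 hw hw'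

end ABGraph

section Rot

lemma chain'_iff_get' {R : V → V → Prop} {l : List V} : List.Chain' R l ↔
    ∀ (i : ℕ) (h : i < l.length - 1), R (l.get ⟨i, by omega⟩) (l.get ⟨i + 1, by omega⟩) := by
  show l.IsChain R ↔ _
  rw [List.isChain_iff_getElem]
  constructor <;> intro h i hi <;> exact h i (by omega)

def IsFan (c : Col V d) (s : Finset (Sym2 V)) (x : V) (L : List V) : Prop :=
  L.Nodup ∧ (∀ w ∈ L, s(x, w) ∈ s) ∧
  List.Chain' (fun a b => ∃ γ : Fin (d + 1), c s(x, b) = some γ ∧ Free c a γ) L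

noncomputable def rot (c : Col V d) (x : V) (L : List V) : Col V d := fun e =>
  if h : ∃ i : Fin L.length, e = s(x, L.get i) then
    if h2 : (h.choose : ℕ) + 1 < L.length then c s(x, L.get ⟨h.choose + 1, h2⟩) else none
  else c e

variable {c : Col V d} {x : V} {L : List V}

lemma rot_fan (hL : L.Nodup) (hx : ∀ w ∈ L, w ≠ x) (i : Fin L.length) :
    rot c x L s(x, L.get i) =
      if h2 : (i : ℕ) + 1 < L.length then c s(x, L.get ⟨(i : ℕ) + 1, h2⟩) else none := by
  unfold rot
  have h : ∃ j : Fin L.length, s(x, L.get i) = s(x, L.get j) := ⟨i, rfl⟩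
  rw [dif_pos h]
  have hch : h.choose = i := by
    have hspec := h.choose_spec
    have h3 : L.get i = L.get h.choose := Sym2.congr_right.mp hspec
    exact (hL.get_inj_iff).mp h3.symm
  simp only [hch]

lemma rot_nonfan (h : ¬ ∃ i : Fin L.length, e = s(x, L.get i)) :
    rot c x L e = c e := dif_neg h

lemma rot_eq_some {e : Sym2 V} {γ : Fin (d + 1)} (hL : L.Nodup) (hx : ∀ w ∈ L, w ≠ x)
    (h : rot c x L e = some γ) :
    (∃ (i : Fin L.length) (h2 : (i : ℕ) + 1 < L.length), e = s(x, L.get i) ∧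
      c s(x, L.get ⟨(i : ℕ) + 1, h2⟩) = some γ) ∨
    ((¬ ∃ i : Fin L.length, e = s(x, L.get i)) ∧ c e = some γ) := by
  by_cases hf : ∃ i : Fin L.length, e = s(x, L.get i)
  · obtain ⟨i, rfl⟩ := hf
    rw [rot_fan hL hx i] at h
    split_ifs at h with h2
    exact Or.inl ⟨i, h2, rfl, h⟩
  · exact Or.inr ⟨hf, by rwa [rot_nonfan hf] at h⟩

section FanLemmas
variable (hs : ↑s ⊆ G.edgeSet) (hG : Good G s c) (hfan : IsFan c s x L) (hne : L ≠ [])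

include hs hfan in
lemma fan_ne_x : ∀ w ∈ L, w ≠ x := by
  intro w hw
  have := hs (hfan.2.1 w hw)
  rw [SimpleGraph.mem_edgeSet] at this
  exact fun h => this.ne' (by rw [h])

include hfan in
lemma fan_chain_get {i : ℕ} (h2 : i + 1 < L.length) :
    ∃ γ : Fin (d + 1), c s(x, L.get ⟨i + 1, h2⟩) = some γ ∧
      Free c (L.get ⟨i, by omega⟩) γ := by
  have := chain'_iff_get'.mp hfan.2.2 i (by omega)
  exact this

include hfan in
lemma fan_colored {i : ℕ} (h1 : 1 ≤ i) (h2 : i < L.length) :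
    c s(x, L.get ⟨i, h2⟩) ≠ none := by
  obtain ⟨j, rfl⟩ : ∃ j, i = j + 1 := ⟨i - 1, by omega⟩
  obtain ⟨γ, hγ, -⟩ := fan_chain_get hfan (i := j) h2
  intro hcon
  rw [hcon] at hγ
  cases hγ

include hs hG hfan in
lemma rot_good : Good G s (rot c x L) := by
  have hL := hfan.1
  have hx := fan_ne_x hs hfan
  constructor
  · intro e he
    by_cases hf : ∃ i : Fin L.length, e = s(x, L.get i)
    · obtain ⟨i, rfl⟩ := hf
      exact hfan.2.1 _ (L.get_mem _)
    · rw [rot_nonfan hf] at he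
      exact hG.1 e he
  · intro u v w γ h1 h2
    rcases rot_eq_some hL hx h1 with ⟨i, hi2, he1, hv1⟩ | ⟨hnf1, hv1⟩ <;>
      rcases rot_eq_some hL hx h2 with ⟨i', hi2', he2, hv2⟩ | ⟨hnf2, hv2⟩
    · -- both fan edges
      have : L.get ⟨(i:ℕ)+1, hi2⟩ = L.get ⟨(i':ℕ)+1, hi2'⟩ := hG.2 hv1 hv2
      have hEq2 : (⟨(i:ℕ)+1, hi2⟩ : Fin L.length) = ⟨(i':ℕ)+1, hi2'⟩ :=
        (hL.get_inj_iff).mp this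
      have hii : (i:ℕ) = (i':ℕ) := by
        have := congrArg Fin.val hEq2
        simp only [Fin.val_mk] at this
        omega
      have hii' : i = i' := Fin.ext hii
      have heq : s(u,v) = s(u,w) := by rw [he1, he2, hii']
      exact Sym2.congr_right.mp heq
    · -- e₁ fan, e₂ not
      rcases Sym2.eq_iff.mp he1 with ⟨rfl, rfl⟩ | ⟨hu, rfl⟩
      · -- u = x
        have : L.get ⟨(i:ℕ)+1, hi2⟩ = w := hG.2 hv1 hv2
        exact absurd ⟨⟨(i:ℕ)+1, hi2⟩, by rw [this]⟩ hnf2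
      · -- u = L.get i, v = x
        obtain ⟨γ', hγ', hfree⟩ := fan_chain_get hfan (i := (i:ℕ)) hi2
        have : γ' = γ := by
          have := hγ'.symm.trans hv1
          injection this
        subst this
        subst hu
        exact absurd hv2 (hfree w)
    · -- e₂ fan, e₁ not
      rcases Sym2.eq_iff.mp he2 with ⟨rfl, rfl⟩ | ⟨hu, rfl⟩
      · have : L.get ⟨(i':ℕ)+1, hi2'⟩ = v := hG.2 hv2 hv1
        exact absurd ⟨⟨(i':ℕ)+1, hi2'⟩, by rw [this]⟩ hnf1
      · obtain ⟨γ', hγ', hfree⟩ := fan_chain_get hfan (i := (i':ℕ)) hi2'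
        have : γ' = γ := by
          have := hγ'.symm.trans hv2
          injection this
        subst this
        subst hu
        exact absurd hv1 (hfree v)
    · exact hG.2 hv1 hv2

include hne in
lemma getLast_eq_fin : L.getLast hne = L.get ⟨L.length - 1, by
    have := List.length_pos_iff.mpr hne; omega⟩ := List.getLast_eq_getElem hne

include hs hfan hne in
lemma rot_last : rot c x L s(x, L.getLast hne) = none := by
  have hlen := List.length_pos_iff.mpr hne
  rw [getLast_eq_fin hne, rot_fan hfan.1 (fan_ne_x hs hfan)]
  rw [dif_neg (show ¬(L.length - 1 + 1 < L.length) by omega)]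

include hs hfan hne in
lemma rot_colored {e : Sym2 V} (hc : c e ≠ none) (hlast : e ≠ s(x, L.getLast hne)) :
    rot c x L e ≠ none := by
  have hlen := List.length_pos_iff.mpr hne
  by_cases hf : ∃ i : Fin L.length, e = s(x, L.get i)
  · obtain ⟨i, rfl⟩ := hf
    rw [rot_fan hfan.1 (fan_ne_x hs hfan)]
    have hi2 : (i : ℕ) + 1 < L.length := by
      rcases Nat.lt_or_ge ((i:ℕ) + 1) L.length with h | h
      · exact h
      · exfalso
        apply hlast
        rw [getLast_eq_fin hne]
        have hieq : i = ⟨L.length - 1, by omega⟩ := Fin.ext (by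
          have := i.2
          show (i:ℕ) = L.length - 1
          omega)
        rw [hieq]
    rw [dif_pos hi2]
    exact fan_colored hfan (by omega) hi2
  · rwa [rot_nonfan hf]

include hfan hne in
lemma fan_head_uncolored_get (hnc : c s(x, L.get ⟨0, List.length_pos_iff.mpr hne⟩) = none) :
    ∀ (i : Fin L.length), c s(x, L.get i) ≠ none → 1 ≤ (i : ℕ) := by
  intro i hi
  by_contra h
  have : (i : ℕ) = 0 := by omega
  apply hi
  have : i = ⟨0, List.length_pos_iff.mpr hne⟩ := Fin.ext this
  rw [this]
  exact hnc

include hs hfan hne in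
lemma rot_used_iff (hnc : c s(x, L.get ⟨0, List.length_pos_iff.mpr hne⟩) = none)
    {γ : Fin (d + 1)} :
    (∃ w, rot c x L s(x, w) = some γ) ↔ ∃ w, c s(x, w) = some γ := by
  have hL := hfan.1
  have hx := fan_ne_x hs hfan
  constructor
  · rintro ⟨w, hw⟩
    rcases rot_eq_some hL hx hw with ⟨i, hi2, he, hv⟩ | ⟨_, hv⟩
    · exact ⟨L.get ⟨(i:ℕ)+1, hi2⟩, hv⟩
    · exact ⟨w, hv⟩
  · rintro ⟨w, hw⟩
    by_cases hf : ∃ i : Fin L.length, s(x, w) = s(x, L.get i)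
    · obtain ⟨i, hi⟩ := hf
      have hwi : w = L.get i := Sym2.congr_right.mp hi
      have h1 : 1 ≤ (i : ℕ) := by
        apply fan_head_uncolored_get hfan hne hnc i
        rw [← hwi, hw]; simp
      have hlt : (i:ℕ) - 1 < L.length := by have := i.2; omega
      refine ⟨L.get ⟨(i:ℕ) - 1, hlt⟩, ?_⟩
      rw [rot_fan hL hx]
      have hcond : ((⟨(i:ℕ)-1, hlt⟩ : Fin L.length) : ℕ) + 1 < L.length := by
        show (i:ℕ) - 1 + 1 < L.length
        have := i.2; omega
      rw [dif_pos hcond]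
      have hidx : (⟨((⟨(i:ℕ)-1, hlt⟩ : Fin L.length) : ℕ) + 1, hcond⟩ : Fin L.length) = i := by
        apply Fin.ext
        show (i:ℕ) - 1 + 1 = (i:ℕ)
        omega
      rw [hidx, ← hwi]
      exact hw
    · exact ⟨w, by rwa [rot_nonfan hf]⟩

include hs hfan hne in
lemma rot_free_x (hnc : c s(x, L.get ⟨0, List.length_pos_iff.mpr hne⟩) = none)
    {γ : Fin (d + 1)} (hf : Free c x γ) : Free (rot c x L) x γ := by
  intro y hy
  obtain ⟨w, hw⟩ := (rot_used_iff hs hfan hne hnc).mp ⟨y, hy⟩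
  exact hf w hw

include hs hfan hne in
lemma rot_free_last {γ : Fin (d + 1)} (hf : Free c (L.getLast hne) γ) :
    Free (rot c x L) (L.getLast hne) γ := by
  intro y hy
  have hL := hfan.1
  have hx := fan_ne_x hs hfan
  have hlen := List.length_pos_iff.mpr hne
  rcases rot_eq_some hL hx hy with ⟨i, hi2, he, hv⟩ | ⟨_, hv⟩
  · -- s(last, y) is a fan edge: last ∈ {x, get i}, last ≠ x, so get i = last, i = len-1
    rcases Sym2.eq_iff.mp he with ⟨h1, _⟩ | ⟨h2, _⟩
    · exact (hx _ (L.getLast_mem hne)) h1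
    · -- y = x and getLast = L.get i
      have : L.getLast hne = L.get i := h2
      rw [getLast_eq_fin hne] at this
      have hEq : (⟨L.length - 1, by omega⟩ : Fin L.length) = i := (hL.get_inj_iff).mp this
      have hval : L.length - 1 = (i : ℕ) := by rw [← hEq]
      omega
  · exact hf y hv

end FanLemmas

/-- The finishing move: rotate the fan and colour its last edge. -/
lemma finish (hs : ↑s ⊆ G.edgeSet) {c : Col V d} (hG : Good G s c) {x y₀ : V} {L : List V}
    (hfan : IsFan c s x L) (hne : L ≠ [])
    (hhead : L.get ⟨0, List.length_pos_iff.mpr hne⟩ = y₀)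
    (hnc : c s(x, y₀) = none) {γ : Fin (d + 1)}
    (hfx : Free c x γ) (hfl : Free c (L.getLast hne) γ) :
    ∃ c' : Col V d, Good G s c' ∧ (∀ e, c e ≠ none → c' e ≠ none) ∧ c' s(x, y₀) ≠ none := by
  have hlen := List.length_pos_iff.mpr hne
  have hnc0 : c s(x, L.get ⟨0, hlen⟩) = none := by rwa [hhead]
  set c₁ := rot c x L with hc₁
  have hG₁ : Good G s c₁ := rot_good hs hG hfan
  have hlast_mem : s(x, L.getLast hne) ∈ s := hfan.2.1 _ (L.getLast_mem hne)
  have hfx₁ : Free c₁ x γ := rot_free_x hs hfan hne hnc0 hfx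
  have hfl₁ : Free c₁ (L.getLast hne) γ := rot_free_last hs hfan hne hfl
  refine ⟨Function.update c₁ s(x, L.getLast hne) (some γ),
    good_update hs hG₁ hlast_mem hfx₁ hfl₁, ?_, ?_⟩
  · intro e he
    by_cases hl : e = s(x, L.getLast hne)
    · rw [hl, Function.update_self]; simp
    · rw [Function.update_of_ne hl]
      exact rot_colored hs hfan hne he hl
  · by_cases hl : y₀ = L.getLast hne
    · rw [hl, Function.update_self]; simp
    · have hedge : s(x, y₀) ≠ s(x, L.getLast hne) := fun h => hl (Sym2.congr_right.mp h)
      rw [Function.update_of_ne hedge]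
      have h2 : 1 < L.length := by
        rcases Nat.lt_or_ge 1 L.length with h | h
        · exact h
        · exfalso
          apply hl
          rw [← hhead, getLast_eq_fin hne]
          congr 1
          exact Fin.ext (by omega)
      rw [hc₁, ← hhead, rot_fan hfan.1 (fan_ne_x hs hfan), dif_pos (by simpa using h2)]
      exact fan_colored hfan (by omega) (by simpa using h2)

end Rot

lemma abGraph_subsingleton' {c : Col V d} {α β : Fin (d+1)} (hG : Good G s c) {y : V}
    (hf : Free c y β) : ∀ w w', (abGraph c α β).Adj y w → (abGraph c α β).Adj y w' →
      w = w' := by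
  rintro w w' ⟨_, hw⟩ ⟨_, hw'⟩
  rcases hw with hw | hw
  · rcases hw' with hw' | hw'
    · exact hG.2 hw hw'
    · exact absurd hw' (hf w')
  · exact absurd hw (hf w)

lemma take_get {L : List V} {k i : ℕ} (hik : i < k) (hi : i < L.length) :
    (L.take k).get ⟨i, by rw [List.length_take]; omega⟩ = L.get ⟨i, hi⟩ :=
  (List.getElem_take' hi hik).symm

/-- The key one-edge extension lemma (Vizing's fan argument). -/
lemma ext_one (hs : ↑s ⊆ G.edgeSet)
    (hdeg : ∀ v : V, {w : V | G.Adj v w}.Finite ∧ {w : V | G.Adj v w}.ncard ≤ d)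
    {c : Col V d} (hG : Good G s c) {x y₀ : V}
    (he : s(x, y₀) ∈ s) (hnc : c s(x, y₀) = none) :
    ∃ c' : Col V d, Good G s c' ∧ (∀ e, c e ≠ none → c' e ≠ none) ∧ c' s(x, y₀) ≠ none := by
  obtain ⟨α, hα⟩ := exists_free hs hdeg hG x
  -- fans starting at y₀
  set FanAt : List V → Prop :=
    fun L => IsFan c s x L ∧ ∃ T, L = y₀ :: T with hFanAt
  have hbound : ∀ L, FanAt L → L.length ≤ d := by
    rintro L ⟨hfan, -⟩
    have hsub : L.toFinset ⊆ (hdeg x).1.toFinset := by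
      intro w hw
      rw [List.mem_toFinset] at hw
      rw [Set.Finite.mem_toFinset]
      exact (SimpleGraph.mem_edgeSet G).mp (hs (hfan.2.1 w hw))
    calc L.length = L.toFinset.card := (List.toFinset_card_of_nodup hfan.1).symm
      _ ≤ (hdeg x).1.toFinset.card := Finset.card_le_card hsub
      _ = {w : V | G.Adj x w}.ncard := (Set.ncard_eq_toFinset_card _ (hdeg x).1).symm
      _ ≤ d := (hdeg x).2
  have hP1 : FanAt [y₀] := by
    refine ⟨⟨List.nodup_singleton y₀, ?_, List.isChain_singleton y₀⟩, [], rfl⟩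
    intro w hw
    rw [List.mem_singleton] at hw
    subst hw
    exact he
  have hd1 : 1 ≤ d := le_trans (hbound [y₀] hP1) (le_refl d)
  set P : ℕ → Prop := fun n => ∃ L, FanAt L ∧ L.length = n with hP
  have hPn : P (Nat.findGreatest P d) :=
    Nat.findGreatest_spec (m := 1) hd1 ⟨[y₀], hP1, rfl⟩
  obtain ⟨L, hLfan, hLlen⟩ := hPn
  have hmax : ∀ L', FanAt L' → L'.length ≤ Nat.findGreatest P d := by
    intro L' hL'
    exact Nat.le_findGreatest (hbound L' hL') ⟨L', hL', rfl⟩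
  have hlen1 : 1 ≤ L.length := by
    rw [hLlen]
    exact Nat.le_findGreatest hd1 ⟨[y₀], hP1, rfl⟩
  have hne : L ≠ [] := by
    intro h; rw [h] at hlen1; simp at hlen1
  have hfan := hLfan.1
  obtain ⟨T, hLT⟩ := hLfan.2
  have hlen := List.length_pos_iff.mpr hne
  have hhead : L.get ⟨0, hlen⟩ = y₀ := by
    subst hLT; rfl
  have hnc0 : c s(x, L.get ⟨0, hlen⟩) = none := by rwa [hhead]
  obtain ⟨β, hβ⟩ := exists_free hs hdeg hG (L.getLast hne)
  by_cases hβx : Free c x β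
  · exact finish hs hG hfan hne hhead hnc (γ := β) hβx hβ
  -- β is used at x
  have hz : ∃ z, c s(x, z) = some β := by
    simp only [Free, not_forall, not_not] at hβx
    exact hβx
  obtain ⟨z, hz⟩ := hz
  -- the fan is maximal, so z appears in it
  have hzL : z ∈ L := by
    by_contra hzL
    have hext : FanAt (L ++ [z]) := by
      refine ⟨⟨?_, ?_, ?_⟩, T ++ [z], by rw [hLT]; rfl⟩
      · rw [List.nodup_append]
        exact ⟨hfan.1, List.nodup_singleton z, by
          intro a ha b hb h
          rw [List.mem_singleton] at hb
          exact hzL (by rw [← hb, ← h]; exact ha)⟩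
      · intro w hw
        rw [List.mem_append, List.mem_singleton] at hw
        rcases hw with hw | rfl
        · exact hfan.2.1 w hw
        · exact hG.1 _ (by rw [hz]; simp)
      · refine List.IsChain.append hfan.2.2 (List.isChain_singleton z) ?_
        intro a ha b hb
        rw [List.getLast?_eq_getLast hne, Option.mem_def] at ha
        injection ha with ha
        rw [List.head?_cons, Option.mem_def] at hb
        injection hb with hb
        subst ha; subst hb
        exact ⟨β, hz, hβ⟩
    have := hmax _ hext
    rw [List.length_append, List.length_singleton] at this
    omega
  obtain ⟨j, hj⟩ := List.mem_iff_get.mp hzL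
  have hj1 : 1 ≤ (j : ℕ) := by
    apply fan_head_uncolored_get hfan hne hnc0 j
    rw [hj, hz]; simp
  have hjlt := j.2
  -- the previous fan vertex y' has β free
  set y' : V := L.get ⟨(j:ℕ) - 1, by omega⟩ with hy'
  have hfree_y' : Free c y' β := by
    obtain ⟨γ, hγ, hfree⟩ := fan_chain_get hfan (i := (j:ℕ) - 1) (by omega)
    have hidx : (⟨(j:ℕ) - 1 + 1, by omega⟩ : Fin L.length) = j := Fin.ext (by
      show (j:ℕ) - 1 + 1 = (j:ℕ); omega)
    rw [hidx, hj, hz] at hγ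
    injection hγ with hγ
    subst hγ
    exact hfree
  have hαβ : α ≠ β := fun h => hβx (h ▸ hα)
  set H := abGraph c α β with hH
  have h2 := abGraph_two (α := α) (β := β) hG
  have h1x := abGraph_subsingleton (β := β) hG hα
  have h1y' := abGraph_subsingleton' (α := α) hG hfree_y'
  have h1yk := abGraph_subsingleton' (α := α) hG hβ
  have hxy' : x ≠ y' := fun h => (fan_ne_x hs hfan y' (L.get_mem _)) h.symm
  have hxyk : x ≠ L.getLast hne :=
    fun h => (fan_ne_x hs hfan _ (L.getLast_mem hne)) h.symm
  have hy'yk : y' ≠ L.getLast hne := by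
    rw [getLast_eq_fin hne]
    intro h
    have := (hfan.1.get_inj_iff).mp h
    have := congrArg Fin.val this
    simp only [Fin.val_mk] at this
    omega
  by_cases hreach : H.Reachable y' x
  · -- Case B: swap the α/β component of the last fan vertex, use the whole fan
    have hnreach : ¬ H.Reachable (L.getLast hne) x := by
      intro hr
      exact no_three_pendant h2 h1x h1y' h1yk hxy' hxyk hy'yk hreach.symm hr.symm
    have hnreach' : ¬ H.Reachable (L.getLast hne) y' :=
      fun hr => hnreach (hr.trans hreach)
    set R : Set V := {v | H.Reachable (L.getLast hne) v} with hR
    have hcl : Closed α β c R := abGraph_closed hs hG _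
    have hxR : x ∉ R := hnreach
    have hy'R : y' ∉ R := hnreach'
    set c₂ := swapC α β c R with hc₂
    have hG₂ : Good G s c₂ := swapC_good hs hG hcl
    have hfan₂ : IsFan c₂ s x L := by
      refine ⟨hfan.1, hfan.2.1, ?_⟩
      rw [chain'_iff_get']
      intro i hi
      obtain ⟨γ, hγ, hfree⟩ := fan_chain_get hfan (i := i) (by omega)
      refine ⟨γ, by rw [hc₂, swapC_eq_of_not_mem hcl hxR]; exact hγ, ?_⟩
      by_cases hij : i + 1 = (j : ℕ)
      · -- this is the β edge; the previous vertex is y' which is not in R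
        have hiy' : L.get ⟨i, by omega⟩ = y' := by
          rw [hy']; congr 1; exact Fin.ext (by show i = (j:ℕ) - 1; omega)
        rw [hiy']
        have hγβ : γ = β := by
          have hidx : (⟨i + 1, by omega⟩ : Fin L.length) = j := Fin.ext hij
          rw [hidx, hj, hz] at hγ
          injection hγ with hq
          exact hq.symm
        subst hγβ
        exact swapC_free_of_not_mem hcl hy'R hfree_y'
      · have hγα : γ ≠ α := by rintro rfl; exact hα _ hγ
        have hγβ : γ ≠ β := by
          rintro rfl
          have := hG.2 hγ hz
          rw [← hj] at this
          have := (hfan.1.get_inj_iff).mp this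
          have := congrArg Fin.val this
          simp only [Fin.val_mk] at this
          omega
        exact swapC_free_other hγα hγβ hfree
    have hfx₂ : Free c₂ x α := swapC_free_of_not_mem hcl hxR hα
    have hfl₂ : Free c₂ (L.getLast hne) α :=
      swapC_free_alpha hcl (by rw [hR]; exact SimpleGraph.Reachable.refl _) hαβ hβ
    have hnc₂ : c₂ s(x, y₀) = none := by
      rw [hc₂, swapC_eq_of_not_mem hcl hxR]; exact hnc
    obtain ⟨c', hc'good, hc'mono, hc'col⟩ := finish hs hG₂ hfan₂ hne hhead hnc₂ (γ := α) hfx₂ hfl₂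
    refine ⟨c', hc'good, ?_, hc'col⟩
    intro e hce
    apply hc'mono
    rw [hc₂, Ne, swapC_eq_none_iff]
    exact hce
  · -- Case A: swap the α/β component of y', use the fan up to y'
    set R : Set V := {v | H.Reachable y' v} with hR
    have hcl : Closed α β c R := abGraph_closed hs hG _
    have hxR : x ∉ R := hreach
    set c₂ := swapC α β c R with hc₂
    have hG₂ : Good G s c₂ := swapC_good hs hG hcl
    set L' : List V := L.take (j : ℕ) with hL'
    have hlen' : L'.length = (j : ℕ) := by
      rw [hL', List.length_take]; omega
    have hne' : L' ≠ [] := by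
      intro h
      rw [h] at hlen'
      simp at hlen'
      omega
    have hlast' : L'.getLast hne' = y' := by
      rw [getLast_eq_fin hne', hy']
      have : ∀ (hh : L'.length - 1 < L'.length), L'.get ⟨L'.length - 1, hh⟩ =
          L.get ⟨(j:ℕ) - 1, by omega⟩ := by
        intro hh
        have h3 : L'.length - 1 = (j:ℕ) - 1 := by omega
        have h4 : (j:ℕ) - 1 < (j:ℕ) := by omega
        calc L'.get ⟨L'.length - 1, hh⟩ = L'.get ⟨(j:ℕ) - 1, by omega⟩ := by
              congr 1; exact Fin.ext h3
          _ = L.get ⟨(j:ℕ) - 1, by omega⟩ := take_get h4 (by omega)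
      exact this _
    have hfan₂ : IsFan c₂ s x L' := by
      refine ⟨List.Nodup.sublist (List.take_prefix _ _).sublist hfan.1, ?_, ?_⟩
      · intro w hw
        exact hfan.2.1 w (List.take_subset _ _ hw)
      · rw [chain'_iff_get']
        intro i hi
        rw [hlen'] at hi
        have hgi : L'.get ⟨i, by rw [hlen']; omega⟩ = L.get ⟨i, by omega⟩ :=
          take_get (by omega) (by omega)
        have hgi1 : L'.get ⟨i + 1, by rw [hlen']; omega⟩ = L.get ⟨i + 1, by omega⟩ :=
          take_get (by omega) (by omega)
        obtain ⟨γ, hγ, hfree⟩ := fan_chain_get hfan (i := i) (by omega)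
        have hγα : γ ≠ α := by rintro rfl; exact hα _ hγ
        have hγβ : γ ≠ β := by
          rintro rfl
          have := hG.2 hγ hz
          rw [← hj] at this
          have := (hfan.1.get_inj_iff).mp this
          have := congrArg Fin.val this
          simp only [Fin.val_mk] at this
          omega
        refine ⟨γ, ?_, ?_⟩
        · rw [hgi1, hc₂, swapC_eq_of_not_mem hcl hxR]
          exact hγ
        · rw [hgi]
          exact swapC_free_other hγα hγβ hfree
    have hhead' : L'.get ⟨0, List.length_pos_iff.mpr hne'⟩ = y₀ := by
      have := take_get (L := L) (k := (j:ℕ)) (i := 0) (by omega) (by omega)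
      rw [this.trans hhead]
    have hfx₂ : Free c₂ x α := swapC_free_of_not_mem hcl hxR hα
    have hfl₂ : Free c₂ (L'.getLast hne') α := by
      rw [hlast']
      exact swapC_free_alpha hcl (by rw [hR]; exact SimpleGraph.Reachable.refl _) hαβ
        hfree_y'
    have hnc₂ : c₂ s(x, y₀) = none := by
      rw [hc₂, swapC_eq_of_not_mem hcl hxR]; exact hnc
    obtain ⟨c', hc'good, hc'mono, hc'col⟩ :=
      finish hs hG₂ hfan₂ hne' hhead' hnc₂ (γ := α) hfx₂ hfl₂
    refine ⟨c', hc'good, ?_, hc'col⟩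
    intro e hce
    apply hc'mono
    rw [hc₂, Ne, swapC_eq_none_iff]
    exact hce


lemma all_colored (hs : ↑s ⊆ G.edgeSet)
    (hdeg : ∀ v : V, {w : V | G.Adj v w}.Finite ∧ {w : V | G.Adj v w}.ncard ≤ d) :
    ∀ (n : ℕ) (c : Col V d), Good G s c → (s.filter (fun e => c e = none)).card ≤ n →
      ∃ c' : Col V d, Good G s c' ∧ ∀ e ∈ s, c' e ≠ none := by
  intro n
  induction n with
  | zero =>
    intro c hG hcard
    refine ⟨c, hG, fun e hes hce => ?_⟩
    have : e ∈ s.filter (fun e => c e = none) := Finset.mem_filter.mpr ⟨hes, hce⟩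
    rw [Nat.le_zero, Finset.card_eq_zero] at hcard
    rw [hcard] at this
    exact absurd this (Finset.notMem_empty e)
  | succ n ih =>
    intro c hG hcard
    by_cases h : ∃ e ∈ s, c e = none
    · obtain ⟨e, hes, hce⟩ := h
      induction e using Sym2.ind with
      | _ x y₀ =>
        obtain ⟨c', hG', hmono, hcol⟩ := ext_one hs hdeg hG hes hce
        apply ih c' hG'
        have hss : s.filter (fun e => c' e = none) ⊂ s.filter (fun e => c e = none) := by
          constructor
          · intro e' he'
            rw [Finset.mem_filter] at he' ⊢
            refine ⟨he'.1, ?_⟩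
            by_contra hcon
            exact (hmono e' hcon) he'.2
          · intro hsub
            have h1 : s(x, y₀) ∈ s.filter (fun e => c e = none) :=
              Finset.mem_filter.mpr ⟨hes, hce⟩
            have h2 := hsub h1
            rw [Finset.mem_filter] at h2
            exact hcol h2.2
        have := Finset.card_lt_card hss
        omega
    · push_neg at h
      exact ⟨c, hG, h⟩

lemma finite_coloring (hs : ↑s ⊆ G.edgeSet)
    (hdeg : ∀ v : V, {w : V | G.Adj v w}.Finite ∧ {w : V | G.Adj v w}.ncard ≤ d) :
    ∃ c : Sym2 V → Fin (d + 1), ∀ u v w : V, s(u, v) ∈ s → s(u, w) ∈ s →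
      c s(u, v) = c s(u, w) → v = w := by
  have hG0 : Good G s (fun _ => (none : Option (Fin (d + 1)))) := by
    constructor
    · intro e he; exact absurd rfl he
    · intro u v w γ h1 _; exact absurd h1 (by simp)
  obtain ⟨c', hG', hcol⟩ := all_colored hs hdeg (s.filter _).card _ hG0 le_rfl
  refine ⟨fun e => (c' e).getD 0, ?_⟩
  intro u v w huv huw hEq
  obtain ⟨γ₁, hγ₁⟩ := Option.ne_none_iff_exists'.mp (hcol _ huv)
  obtain ⟨γ₂, hγ₂⟩ := Option.ne_none_iff_exists'.mp (hcol _ huw)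
  simp only [hγ₁, hγ₂, Option.getD_some] at hEq
  subst hEq
  exact hG'.2 hγ₁ hγ₂

/-- Vizing's theorem for arbitrary graphs of bounded degree, via ultrafilter compactness. -/
theorem vizing_infinite {V : Type*} (G : SimpleGraph V) (d : ℕ)
    (hdeg : ∀ v : V, {w : V | G.Adj v w}.Finite ∧ {w : V | G.Adj v w}.ncard ≤ d) :
    ∃ c : Sym2 V → Fin (d + 1),
      ∀ e₁ ∈ G.edgeSet, ∀ e₂ ∈ G.edgeSet, e₁ ≠ e₂ →
        (∃ v : V, v ∈ e₁ ∧ v ∈ e₂) → c e₁ ≠ c e₂ := by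
  classical
  set ι := Finset (Sym2 V)
  have hsub : ∀ t : ι, ↑(t.filter (fun e => e ∈ G.edgeSet)) ⊆ G.edgeSet := by
    intro t e he
    simp only [Finset.coe_filter, Set.mem_setOf_eq] at he
    exact he.2
  have hex : ∀ t : ι, ∃ c : Sym2 V → Fin (d + 1), ∀ u v w : V,
      s(u, v) ∈ t.filter (fun e => e ∈ G.edgeSet) →
      s(u, w) ∈ t.filter (fun e => e ∈ G.edgeSet) →
      c s(u, v) = c s(u, w) → v = w :=
    fun t => finite_coloring (hsub t) hdeg
  choose ct hct using hex
  haveI : Nonempty ι := ⟨∅⟩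
  set U : Ultrafilter ι := Ultrafilter.of Filter.atTop with hUdef
  have hU : ∀ t₀ : ι, {t | t₀ ≤ t} ∈ U :=
    fun t₀ => Ultrafilter.of_le Filter.atTop (Filter.mem_atTop t₀)
  have hlim : ∀ e : Sym2 V, ∃ γ : Fin (d + 1), {t | ct t e = γ} ∈ U := by
    intro e
    by_contra hcon
    push_neg at hcon
    have hmemc : ∀ γ : Fin (d + 1), {t | ct t e = γ}ᶜ ∈ U := by
      intro γ
      rw [Ultrafilter.compl_mem_iff_notMem]
      exact hcon γ
    have : (⋂ γ : Fin (d + 1), {t | ct t e = γ}ᶜ) ∈ U := Filter.iInter_mem.mpr hmemc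
    obtain ⟨t, ht⟩ := Ultrafilter.nonempty_of_mem this
    simp only [Set.mem_iInter, Set.mem_compl_iff, Set.mem_setOf_eq] at ht
    exact ht (ct t e) rfl
  choose cc hcc using hlim
  refine ⟨cc, ?_⟩
  rintro e₁ he₁ e₂ he₂ hne ⟨v, hv1, hv2⟩ hEq
  obtain ⟨w₁, rfl⟩ := Sym2.mem_iff_exists.mp hv1
  obtain ⟨w₂, rfl⟩ := Sym2.mem_iff_exists.mp hv2
  have hS : ({t | ({s(v, w₁), s(v, w₂)} : Finset (Sym2 V)) ≤ t} ∩
      ({t | ct t s(v, w₁) = cc s(v, w₁)} ∩ {t | ct t s(v, w₂) = cc s(v, w₂)})) ∈ U :=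
    Filter.inter_mem (hU _) (Filter.inter_mem (hcc _) (hcc _))
  obtain ⟨t, ht0, ht1, ht2⟩ := Ultrafilter.nonempty_of_mem hS
  have hm1 : s(v, w₁) ∈ t.filter (fun e => e ∈ G.edgeSet) := by
    rw [Finset.mem_filter]
    exact ⟨ht0 (by simp), he₁⟩
  have hm2 : s(v, w₂) ∈ t.filter (fun e => e ∈ G.edgeSet) := by
    rw [Finset.mem_filter]
    exact ⟨ht0 (by simp), he₂⟩
  have : w₁ = w₂ := by
    apply hct t v w₁ w₂ hm1 hm2
    rw [Set.mem_setOf_eq] at ht1 ht2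
    rw [ht1, ht2, hEq]
  exact hne (by rw [this])

end VZ

/-- Vizing's theorem for countably infinite graphs: a countably
infinite simple graph of maximum degree at most `d` admits a proper edge
colouring with `d + 1` colours. -/
theorem statement10 {V : Type*} [Countable V] [Infinite V] (G : SimpleGraph V) (d : ℕ)
    (hdeg : ∀ v : V, {w : V | G.Adj v w}.Finite ∧ {w : V | G.Adj v w}.ncard ≤ d) :
    ∃ c : Sym2 V → Fin (d + 1),
      ∀ e₁ ∈ G.edgeSet, ∀ e₂ ∈ G.edgeSet, e₁ ≠ e₂ →
        (∃ v : V, v ∈ e₁ ∧ v ∈ e₂) → c e₁ ≠ c e₂ := by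
  exact VZ.vizing_infinite G d hdeg

end GeomPropT
end
end

section
/- Let X be a space and let R > 0. Then there exist an integer n ≥ 0 and matrices A_0, A_1, …, A_n ∈ S_X with A_0 = 1 (the identity matrix) such that, for every partial translation v with supp(v) ⊆ Tube_X(R), there exist diagonal matrices f_0, f_1, …, f_n ∈ ℓ∞(X) with f_i² = f_i (i.e. with entries in {0,1}) satisfying v = Σ_{i=0}^n f_i A_i and vv* = Σ_{i=0}^n f_i. -/
open scoped ENNReal Classical

noncomputable section

namespace GeomPropT

variable {X : Type*}

variable {H : Type*} [NormedAddCommGroup H] [InnerProductSpace ℂ H]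

/-! ### Auxiliary machinery for statement 11 -/

/-- Greedy coloring along an injection into `ℕ`. -/
noncomputable def greedy (ι : X → ℕ) (A : X → X → Prop) (x : X) : ℕ :=
  sInf {n | ∀ y, A x y → ι y < ι x → greedy ι A y ≠ n}
termination_by ι x

section Greedy
variable {ι : X → ℕ} {A : X → X → Prop} {N : ℕ}

lemma greedy_mem_and_le (hfin : ∀ x, {y | A x y}.Finite ∧ {y | A x y}.ncard ≤ N) (x : X) :
    (∀ y, A x y → ι y < ι x → greedy ι A y ≠ greedy ι A x) ∧ greedy ι A x ≤ N := by
  have hS : ∀ x : X, ∃ n ≤ N, n ∈ {n | ∀ y, A x y → ι y < ι x → greedy ι A y ≠ n} := by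
    intro x
    set t : Finset ℕ := (hfin x).1.toFinset.image (greedy ι A) with ht
    have htc : t.card ≤ N := by
      refine le_trans (Finset.card_image_le) ?_
      rw [← Set.ncard_eq_toFinset_card _ (hfin x).1]
      exact (hfin x).2
    have : ∃ n ∈ Finset.range (N + 1), n ∉ t := by
      by_contra hcon
      push_neg at hcon
      have hsub : Finset.range (N+1) ⊆ t := fun n hn => hcon n hn
      have := Finset.card_le_card hsub
      simp [Finset.card_range] at this
      omega
    obtain ⟨n, hn1, hn2⟩ := this
    refine ⟨n, by simpa using Nat.lt_succ_iff.mp (Finset.mem_range.mp hn1), ?_⟩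
    intro y hy _
    intro hgy
    exact hn2 (by rw [ht]; exact Finset.mem_image.mpr ⟨y, by simpa using hy, hgy⟩)
  obtain ⟨n, hnN, hn⟩ := hS x
  constructor
  · have := Nat.sInf_mem (⟨n, hn⟩ : Set.Nonempty _)
    rw [greedy]
    exact this
  · rw [greedy]
    exact le_trans (Nat.sInf_le hn) hnN

lemma greedy_ne (hι : Function.Injective ι) (hsym : ∀ x y, A x y → A y x)
    (hfin : ∀ x, {y | A x y}.Finite ∧ {y | A x y}.ncard ≤ N)
    {x y : X} (hxy : A x y) (hne : x ≠ y) : greedy ι A x ≠ greedy ι A y := by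
  rcases lt_trichotomy (ι x) (ι y) with h | h | h
  · exact fun he => (greedy_mem_and_le hfin y).1 x (hsym x y hxy) h he
  · exact absurd (hι h) hne
  · exact fun he => (greedy_mem_and_le hfin x).1 y hxy h he.symm
end Greedy

lemma isSpace_countable {X : Type*} [EMetricSpace X] (hX : IsSpace X) : Countable X := by
  obtain ⟨E, ⟨⟨S, hS, hES⟩, hgen⟩⟩ := hX.monogenic
  have hpow : ∀ n : ℕ, compPow E n ⊆ Tube X ((n + 1 : ℕ) * S) := by
    intro n
    induction n with
    | zero => intro p hp; simpa [Tube, one_mul] using hES hp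
    | succ n ih =>
      rintro ⟨x, y⟩ ⟨z, hz1, hz2⟩
      have h1 : edist x z ≤ S := hES hz1
      have h2 : edist z y ≤ (n + 1 : ℕ) * S := ih hz2
      have : edist x y ≤ S + (n + 1 : ℕ) * S := le_trans (edist_triangle x z y) (add_le_add h1 h2)
      refine le_trans this (le_of_eq ?_)
      push_cast
      ring
  have hcomp : ∀ x : X, {y : X | edist x y < ⊤}.Countable := by
    intro x
    have hsub : {y : X | edist x y < ⊤} ⊆ ⋃ n : ℕ, {y : X | edist x y ≤ (n + 1 : ℕ) * S} := by
      intro y hy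
      have hc : Controlled {((x : X), (y : X))} := by
        refine ⟨edist x y, hy, ?_⟩
        rintro p hp
        rw [Set.mem_singleton_iff] at hp
        subst hp
        show edist x y ≤ edist x y
        exact le_rfl
      obtain ⟨n, hn⟩ := hgen {(x, y)} hc
      exact Set.mem_iUnion.mpr ⟨n, hpow n (hn rfl)⟩
    refine Set.Countable.mono hsub (Set.countable_iUnion fun n => ?_)
    obtain ⟨N, hN⟩ := hX.boundedGeometry ((n + 1 : ℕ) * S) (ENNReal.mul_lt_top (ENNReal.natCast_lt_top _) hS)
    exact (hN x).1.countable
  have huniv : (Set.univ : Set X).Countable := by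
    have : (Set.univ : Set X) ⊆ ⋃₀ {C : Set X | ∃ x : X, C = {y : X | edist x y < ⊤}} := by
      intro y _
      exact ⟨{z : X | edist y z < ⊤}, ⟨y, rfl⟩, by simp [edist_self]⟩
    refine Set.Countable.mono this (Set.Countable.sUnion hX.countableComponents ?_)
    rintro C ⟨x, rfl⟩
    exact hcomp x
  exact Set.countable_univ_iff.mp huniv

section PermAux
variable [EMetricSpace X] (c : X → ℕ) (R : ℝ≥0∞) (p : ℕ × ℕ)

/-- The relation defining the color-pair matching. -/
def auxPT (x y : X) : Prop :=
  x ≠ y ∧ edist x y ≤ R ∧ ((c x = p.1 ∧ c y = p.2) ∨ (c x = p.2 ∧ c y = p.1))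

variable {c R p}

lemma auxPT_symm {x y : X} (h : auxPT c R p x y) : auxPT c R p y x := by
  obtain ⟨h1, h2, h3⟩ := h
  exact ⟨h1.symm, by rwa [edist_comm], h3.elim (fun h => Or.inr ⟨h.2, h.1⟩) (fun h => Or.inl ⟨h.2, h.1⟩)⟩

lemma auxPT_unique (hc : ∀ x y : X, x ≠ y → edist x y ≤ 2 * R → c x ≠ c y)
    {x y y' : X} (h : auxPT c R p x y) (h' : auxPT c R p x y') : y = y' := by
  by_contra hne
  have hd : edist y y' ≤ 2 * R := by
    calc edist y y' ≤ edist y x + edist x y' := edist_triangle _ _ _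
    _ ≤ R + R := by rw [edist_comm]; exact add_le_add h.2.1 h'.2.1
    _ = 2 * R := (two_mul R).symm
  have hcc : c y ≠ c y' := hc y y' hne hd
  apply hcc
  rcases h.2.2 with ⟨ha, hb⟩ | ⟨ha, hb⟩ <;> rcases h'.2.2 with ⟨ha', hb'⟩ | ⟨ha', hb'⟩ <;> omega

variable (c R p) in
/-- The involution swapping matched pairs. -/
def auxTr (x : X) : X := if h : ∃ y, auxPT c R p x y then h.choose else x

lemma auxTr_cases (x : X) : auxTr c R p x = x ∨ auxPT c R p x (auxTr c R p x) := by
  unfold auxTr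
  split_ifs with h
  · exact Or.inr h.choose_spec
  · exact Or.inl rfl

lemma auxTr_eq (hc : ∀ x y : X, x ≠ y → edist x y ≤ 2 * R → c x ≠ c y)
    {x y : X} (h : auxPT c R p x y) : auxTr c R p x = y := by
  unfold auxTr
  rw [dif_pos ⟨y, h⟩]
  exact auxPT_unique hc (Exists.choose_spec (⟨y, h⟩ : ∃ y, auxPT c R p x y)) h

lemma auxTr_invol (hc : ∀ x y : X, x ≠ y → edist x y ≤ 2 * R → c x ≠ c y)
    (x : X) : auxTr c R p (auxTr c R p x) = x := by
  rcases auxTr_cases (c := c) (R := R) (p := p) x with h | h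
  · rw [h, h]
  · exact auxTr_eq hc (auxPT_symm h)

variable (c R p) in
/-- The permutation matrix of the involution. -/
def auxPerm : X → X → ℂ := fun x y => if auxTr c R p x = y then 1 else 0

lemma isPermMatrix_auxPerm (hR : R < ⊤)
    (hc : ∀ x y : X, x ≠ y → edist x y ≤ 2 * R → c x ≠ c y) :
    IsPermMatrix (auxPerm c R p) := by
  have key : ∀ x y : X, auxPerm c R p x y = 1 ↔ auxTr c R p x = y := by
    intro x y
    unfold auxPerm
    split_ifs with h
    · simp [h]
    · simp [h]
  refine ⟨fun x y => ?_, fun x => ?_, fun y => ?_, R, hR, ?_⟩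
  · unfold auxPerm; split_ifs <;> simp
  · exact ⟨auxTr c R p x, (key _ _).mpr rfl, fun y hy => ((key _ _).mp hy).symm⟩
  · refine ⟨auxTr c R p y, (key _ _).mpr (auxTr_invol hc y), fun x hx => ?_⟩
    have := (key _ _).mp hx
    rw [← this, auxTr_invol hc]
  · rintro ⟨x, y⟩ hxy
    have h1 : auxTr c R p x = y := by
      by_contra hne
      exact hxy (by unfold auxPerm; simp only [if_neg hne])
    rcases auxTr_cases (c := c) (R := R) (p := p) x with h | h
    · rw [h] at h1
      subst h1
      show edist x x ≤ R
      simp [edist_self]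
    · rw [h1] at h
      exact h.2.1

lemma isPermMatrix_matOne : IsPermMatrix (matOne : X → X → ℂ) := by
  have key : ∀ x y : X, (matOne : X → X → ℂ) x y = 1 ↔ x = y := by
    intro x y; unfold matOne; split_ifs with h <;> simp [h]
  refine ⟨fun x y => ?_, fun x => ⟨x, (key _ _).mpr rfl, fun y hy => ((key _ _).mp hy).symm⟩,
    fun y => ⟨y, (key _ _).mpr rfl, fun x hx => (key _ _).mp hx⟩, 0, by simp, ?_⟩
  · unfold matOne; split_ifs <;> simp
  · rintro ⟨x, y⟩ hxy
    have : x = y := by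
      by_contra hne
      exact hxy (by unfold matOne; simp only [if_neg hne])
    subst this
    show edist x x ≤ 0
    simp [edist_self]

end PermAux

lemma auxAssemble [EMetricSpace X] {m : ℕ} {R : ℝ≥0∞} (A : Fin (m + 1) → X → X → ℂ)
    (hperm : ∀ i, IsPermMatrix (A i))
    (hcov : ∀ x y : X, edist x y ≤ R → ∃ i : Fin (m + 1), A i x y = 1)
    (v : X → X → ℂ) (hv : IsPartialTranslation v) (hsupp : matSupport v ⊆ Tube X R) :
    ∃ f : Fin (m + 1) → X → ℂ,
      (∀ i x, f i x = 0 ∨ f i x = 1) ∧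
      (∀ x y : X, v x y = ∑ i : Fin (m + 1), f i x * A i x y) ∧
      (∀ x y : X, matMul v (matStar v) x y =
        if x = y then ∑ i : Fin (m + 1), f i x else 0) := by
  obtain ⟨h01, hrow, hcol, -⟩ := hv
  have hedist : ∀ x z : X, v x z = 1 → edist x z ≤ R := by
    intro x z h
    have hm : (x, z) ∈ matSupport v := by
      show v x z ≠ 0
      rw [h]
      exact one_ne_zero
    exact hsupp hm
  have hexd : ∀ x : X, (∃ z, v x z = 1) →
      ∃ i : Fin (m + 1), ∃ z, v x z = 1 ∧ A i x z = 1 := by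
    rintro x ⟨z, hz⟩
    obtain ⟨i, hi⟩ := hcov x z (hedist x z hz)
    exact ⟨i, z, hz, hi⟩
  set F : Fin (m + 1) → X → ℂ := fun i x =>
    if h : ∃ i' : Fin (m + 1), ∃ z, v x z = 1 ∧ A i' x z = 1 then
      (if i = h.choose then 1 else 0) else 0 with hF
  have hsum1 : ∀ (x : X) (h : ∃ i' : Fin (m + 1), ∃ z, v x z = 1 ∧ A i' x z = 1)
      (g : Fin (m + 1) → ℂ), (∑ i : Fin (m + 1), F i x * g i) = g h.choose := by
    intro x h g
    rw [hF]
    simp only [dif_pos h, ite_mul, one_mul, zero_mul]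
    simp [Finset.sum_ite_eq']
  have hallzero : ∀ x : X, (¬ ∃ i' : Fin (m + 1), ∃ z, v x z = 1 ∧ A i' x z = 1) →
      ∀ z, v x z = 0 := by
    intro x h z
    rcases h01 x z with hh | hh
    · exact hh
    · exact absurd (hexd x ⟨z, hh⟩) h
  refine ⟨F, ?_, ?_, ?_⟩
  · intro i x
    rw [hF]
    dsimp only
    split_ifs <;> simp
  · intro x y
    by_cases h : ∃ i' : Fin (m + 1), ∃ z, v x z = 1 ∧ A i' x z = 1
    · obtain ⟨z₀, hvz, hAz⟩ := h.choose_spec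
      rw [hsum1 x h (fun i => A i x y)]
      by_cases hy : y = z₀
      · subst hy; rw [hvz, hAz]
      · have h1 : v x y = 0 := by
          rcases h01 x y with hh | hh
          · exact hh
          · exact absurd (hrow x y z₀ hh hvz) hy
        have h2 : A h.choose x y = 0 := by
          rcases (hperm h.choose).1 x y with hh | hh
          · exact hh
          · obtain ⟨w, hw, huniq⟩ := (hperm h.choose).2.1 x
            exact absurd ((huniq y hh).trans (huniq z₀ hAz).symm) hy
        rw [h1, h2]
    · rw [hallzero x h y, hF]
      simp only [dif_neg h, zero_mul, Finset.sum_const_zero]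
  · intro x y
    have hmm : matMul v (matStar v) x y = ∑' z, v x z * starRingEnd ℂ (v y z) := rfl
    by_cases hxy : x = y
    · subst hxy
      rw [if_pos rfl]
      by_cases h : ∃ i' : Fin (m + 1), ∃ z, v x z = 1 ∧ A i' x z = 1
      · obtain ⟨z₀, hvz, hAz⟩ := h.choose_spec
        have hzero : ∀ z, z ≠ z₀ → v x z * starRingEnd ℂ (v x z) = 0 := by
          intro z hz
          have hvz0 : v x z = 0 := by
            rcases h01 x z with hh | hh
            · exact hh
            · exact absurd (hrow x z z₀ hh hvz) hz
          rw [hvz0, zero_mul]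
        have hs : (∑ i : Fin (m + 1), F i x) = 1 := by
          have := hsum1 x h (fun _ => (1 : ℂ))
          simpa using this
        rw [hmm, tsum_eq_single z₀ hzero, hvz, hs]
        simp
      · have hz : ∀ z, v x z * starRingEnd ℂ (v x z) = 0 := fun z => by
          rw [hallzero x h z, zero_mul]
        rw [hmm, tsum_congr hz, tsum_zero, hF]
        simp only [dif_neg h, Finset.sum_const_zero]
    · rw [if_neg hxy, hmm]
      have hz : ∀ z, v x z * starRingEnd ℂ (v y z) = 0 := by
        intro z
        rcases h01 x z with hh | hh
        · rw [hh, zero_mul]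
        · rcases h01 y z with hh' | hh'
          · rw [hh', map_zero, mul_zero]
          · exact absurd (hcol x y z hh hh') hxy
      rw [tsum_congr hz, tsum_zero]


/-- For every `R > 0` there are finitely many permutation matrices
`A_0 = 1, A_1, …, A_n ∈ S_X` such that every partial translation supported in
`Tube_X(R)` decomposes as `v = Σ f_i A_i` with idempotent diagonal coefficients
`f_i`, and `vv* = Σ f_i`. -/
theorem statement11 {X : Type*} [EMetricSpace X] (hX : IsSpace X)
    (R : ℝ≥0∞) (hR0 : 0 < R) (hR : R < ⊤) :
    ∃ (n : ℕ) (A : Fin (n + 1) → X → X → ℂ),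
      A 0 = matOne ∧ (∀ i, IsPermMatrix (A i)) ∧
      ∀ v : X → X → ℂ, IsPartialTranslation v → matSupport v ⊆ Tube X R →
        ∃ f : Fin (n + 1) → X → ℂ,
          (∀ i x, f i x = 0 ∨ f i x = 1) ∧
          (∀ x y : X, v x y = ∑ i : Fin (n + 1), f i x * A i x y) ∧
          (∀ x y : X, matMul v (matStar v) x y =
            if x = y then ∑ i : Fin (n + 1), f i x else 0) := by
  have hcnt : Countable X := isSpace_countable hX
  obtain ⟨ι, hι⟩ := exists_injective_nat X
  have h2R : (2 : ℝ≥0∞) * R < ⊤ := ENNReal.mul_lt_top (by simp) hR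
  obtain ⟨N, hN⟩ := hX.boundedGeometry (2 * R) h2R
  set Adj : X → X → Prop := fun x y => x ≠ y ∧ edist x y ≤ 2 * R with hAdj
  have hfin : ∀ x, {y | Adj x y}.Finite ∧ {y | Adj x y}.ncard ≤ N := by
    intro x
    have hsub : {y | Adj x y} ⊆ {y | edist x y ≤ 2 * R} := fun y hy => hy.2
    exact ⟨(hN x).1.subset hsub, le_trans (Set.ncard_le_ncard hsub (hN x).1) (hN x).2⟩
  set c : X → ℕ := greedy ι Adj with hcdef
  have hc : ∀ x y : X, x ≠ y → edist x y ≤ 2 * R → c x ≠ c y := fun x y h1 h2 =>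
    greedy_ne hι (fun a b hab => ⟨hab.1.symm, by rw [edist_comm]; exact hab.2⟩) hfin ⟨h1, h2⟩ h1
  have hcN : ∀ x, c x ≤ N := fun x => (greedy_mem_and_le hfin x).2
  set e : Fin ((N + 1) * (N + 1)) → ℕ × ℕ := fun j =>
    ((finProdFinEquiv.symm j).1.val, (finProdFinEquiv.symm j).2.val) with he
  set A : Fin ((N + 1) * (N + 1) + 1) → X → X → ℂ :=
    Fin.cases matOne (fun j => auxPerm c R (e j)) with hA
  have hperm : ∀ i, IsPermMatrix (A i) := by
    intro i
    induction i using Fin.cases with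
    | zero =>
      simp only [hA, Fin.cases_zero]
      exact isPermMatrix_matOne
    | succ j =>
      simp only [hA, Fin.cases_succ]
      exact isPermMatrix_auxPerm hR hc
  have hcov : ∀ x y : X, edist x y ≤ R → ∃ i : Fin ((N + 1) * (N + 1) + 1), A i x y = 1 := by
    intro x y hd
    by_cases hxy : x = y
    · subst hxy
      refine ⟨0, ?_⟩
      simp only [hA, Fin.cases_zero]
      simp [matOne]
    · have hPT : auxPT c R (c x, c y) x y := ⟨hxy, hd, Or.inl ⟨rfl, rfl⟩⟩
      set j : Fin ((N + 1) * (N + 1)) := finProdFinEquiv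
        (⟨c x, Nat.lt_succ_of_le (hcN x)⟩, ⟨c y, Nat.lt_succ_of_le (hcN y)⟩) with hj
      refine ⟨j.succ, ?_⟩
      have hej : e j = (c x, c y) := by
        rw [he, hj]
        simp [Equiv.symm_apply_apply]
      simp only [hA, Fin.cases_succ, hej]
      unfold auxPerm
      rw [auxTr_eq hc hPT]
      simp
  refine ⟨(N + 1) * (N + 1), A, ?_, hperm, ?_⟩
  · simp only [hA, Fin.cases_zero]
  · intro v hv hsupp
    exact auxAssemble A hperm hcov v hv hsupp

end GeomPropT
end
end

section
/- Let X be a space, X_0 a coarse component of X, and Q : ℂ_u[X] → ℂ_u[X_0] the restriction map Q(T) = (T_{x,y})_{x,y ∈ X_0}. Suppose (P_k) is a sequence in ℂ_u[X] and (ε_k) a sequence of nonnegative reals such that for every representation π of ℂ_u[X] on a complex Hilbert space, ‖π(P_k) − p_π‖ ≤ ε_k for all k, where p_π is the orthogonal projection onto the invariant vectors H^π. Then for every representation σ of ℂ_u[X_0] on a complex Hilbert space, ‖σ(Q(P_k)) − p_σ‖ ≤ ε_k for all k, where p_σ is the orthogonal projection onto H^σ. (In particular, the Kazhdan projection of the maximal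 uniform Roe algebra of X restricts to the Kazhdan projection of the maximal uniform Roe algebra of X_0.) -/
open scoped ENNReal Classical

noncomputable section

namespace GeomPropT

variable {X : Type*}

variable {H : Type*} [NormedAddCommGroup H] [InnerProductSpace ℂ H]

section Restriction

variable [EMetricSpace X] (x₀ : X)

/-- The restriction map `Q : ℂ_u[X] → ℂ_u[X₀]`. -/
def restrictMat (x₀ : X) (T : X → X → ℂ) :
    {y : X // edist x₀ y < ⊤} → {y : X // edist x₀ y < ⊤} → ℂ :=
  fun a b => T a.1 b.1

lemma controlled_restrictMat {T : X → X → ℂ} (h : Controlled (matSupport T)) :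
    Controlled (matSupport (restrictMat x₀ T)) := by
  obtain ⟨R, hR, hsub⟩ := h
  refine ⟨R, hR, fun p hp => ?_⟩
  have : ((p.1.1 : X), (p.2.1 : X)) ∈ matSupport T := hp
  have := hsub this
  simpa [Tube, Subtype.edist_eq] using this

lemma cuElem_restrictMat {T : X → X → ℂ} (h : CuElem T) :
    CuElem (restrictMat x₀ T) := by
  obtain ⟨⟨M, hM⟩, hc⟩ := h
  exact ⟨⟨M, fun a b => hM a.1 b.1⟩, controlled_restrictMat x₀ hc⟩

lemma matMul_restrictMat {T S : X → X → ℂ} (hT : Controlled (matSupport T))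
    (a b : {y : X // edist x₀ y < ⊤}) :
    matMul (restrictMat x₀ T) (restrictMat x₀ S) a b = matMul T S a.1 b.1 := by
  obtain ⟨R, hR, hsub⟩ := hT
  have hss : Function.support (fun z : X => T a.1 z * S z b.1) ⊆
      {z : X | edist x₀ z < ⊤} := by
    intro z hz
    have hTz : T a.1 z ≠ 0 := fun h0 => hz (by simp [h0])
    have : edist a.1 z ≤ R := hsub (show ((a.1 : X), z) ∈ matSupport T from hTz)
    have : edist x₀ z < ⊤ :=
      lt_of_le_of_lt (edist_triangle x₀ a.1 z)
        (ENNReal.add_lt_top.2 ⟨a.2, lt_of_le_of_lt this hR⟩)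
    exact this
  exact tsum_subtype_eq_of_support_subset hss

lemma restrictMat_matStar (T : X → X → ℂ) :
    restrictMat x₀ (matStar T) = matStar (restrictMat x₀ T) := rfl

variable {H : Type} [NormedAddCommGroup H] [InnerProductSpace ℂ H] [CompleteSpace H]

lemma isRep_restrict (σ : ({y : X // edist x₀ y < ⊤} → {y : X // edist x₀ y < ⊤} → ℂ) →
    (H →L[ℂ] H)) (hσ : IsRepresentation σ) :
    IsRepresentation (fun T : X → X → ℂ => σ (restrictMat x₀ T)) where
  map_one := by
    have : restrictMat x₀ (matOne : X → X → ℂ) = matOne := by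
      funext a b
      simp only [restrictMat, matOne]
      by_cases h : a = b
      · simp [h]
      · have hne : a.1 ≠ b.1 := fun h' => h (Subtype.ext h')
        simp [h, hne]
    rw [this, hσ.map_one]
  map_add T S hT hS := by
    have : restrictMat x₀ (T + S) = restrictMat x₀ T + restrictMat x₀ S := rfl
    rw [this]
    exact hσ.map_add _ _ (cuElem_restrictMat x₀ hT) (cuElem_restrictMat x₀ hS)
  map_smul c T hT := by
    have : restrictMat x₀ (c • T) = c • restrictMat x₀ T := rfl
    rw [this]
    exact hσ.map_smul c _ (cuElem_restrictMat x₀ hT)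
  map_mul T S hT hS := by
    have : restrictMat x₀ (matMul T S) = matMul (restrictMat x₀ T) (restrictMat x₀ S) := by
      funext a b
      exact (matMul_restrictMat x₀ hT.2 a b).symm
    rw [this]
    exact hσ.map_mul _ _ (cuElem_restrictMat x₀ hT) (cuElem_restrictMat x₀ hS)
  map_star T hT := by
    rw [restrictMat_matStar]
    exact hσ.map_star _ (cuElem_restrictMat x₀ hT)

/-- Extension of a matrix on `X₀` by zero. -/
def extendMat (x₀ : X) (v : {y : X // edist x₀ y < ⊤} → {y : X // edist x₀ y < ⊤} → ℂ) :
    X → X → ℂ :=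
  fun x y =>
    if hx : edist x₀ x < ⊤ then if hy : edist x₀ y < ⊤ then v ⟨x, hx⟩ ⟨y, hy⟩ else 0 else 0

lemma extendMat_eq_one {v : {y : X // edist x₀ y < ⊤} → {y : X // edist x₀ y < ⊤} → ℂ}
    {x y : X} (h : extendMat x₀ v x y = 1) :
    ∃ (hx : edist x₀ x < ⊤) (hy : edist x₀ y < ⊤), v ⟨x, hx⟩ ⟨y, hy⟩ = 1 := by
  by_cases hx : edist x₀ x < ⊤
  · by_cases hy : edist x₀ y < ⊤
    · exact ⟨hx, hy, by simpa [extendMat, hx, hy] using h⟩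
    · simp [extendMat, hx, hy] at h
  · simp [extendMat, hx] at h

lemma isPT_restrict {v : X → X → ℂ} (hv : IsPartialTranslation v) :
    IsPartialTranslation (restrictMat x₀ v) := by
  obtain ⟨h01, hr, hc, hctrl⟩ := hv
  refine ⟨fun a b => h01 a.1 b.1, ?_, ?_, controlled_restrictMat x₀ hctrl⟩
  · intro a b b' h h'
    exact Subtype.ext (hr a.1 b.1 b'.1 h h')
  · intro a a' b h h'
    exact Subtype.ext (hc a.1 a'.1 b.1 h h')

lemma isPT_extend {v : {y : X // edist x₀ y < ⊤} → {y : X // edist x₀ y < ⊤} → ℂ}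
    (hv : IsPartialTranslation v) : IsPartialTranslation (extendMat x₀ v) := by
  obtain ⟨h01, hr, hc, hctrl⟩ := hv
  refine ⟨?_, ?_, ?_, ?_⟩
  · intro x y
    unfold extendMat
    split_ifs with hx hy
    · exact h01 _ _
    · exact Or.inl rfl
    · exact Or.inl rfl
  · intro x y y' h h'
    obtain ⟨hx, hy, hvv⟩ := extendMat_eq_one x₀ h
    obtain ⟨hx', hy', hvv'⟩ := extendMat_eq_one x₀ h'
    exact congrArg Subtype.val (hr ⟨x, hx⟩ ⟨y, hy⟩ ⟨y', hy'⟩ hvv hvv')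
  · intro x x' y h h'
    obtain ⟨hx, hy, hvv⟩ := extendMat_eq_one x₀ h
    obtain ⟨hx', hy', hvv'⟩ := extendMat_eq_one x₀ h'
    exact congrArg Subtype.val (hc ⟨x, hx⟩ ⟨x', hx'⟩ ⟨y, hy⟩ hvv hvv')
  · obtain ⟨R, hR, hsub⟩ := hctrl
    refine ⟨R, hR, fun p hp => ?_⟩
    by_cases hx : edist x₀ p.1 < ⊤
    · by_cases hy : edist x₀ p.2 < ⊤
      · have : v ⟨p.1, hx⟩ ⟨p.2, hy⟩ ≠ 0 := by
          simpa [matSupport, extendMat, hx, hy] using hp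
        have := hsub (show ((⟨p.1, hx⟩ : {y : X // edist x₀ y < ⊤}), ⟨p.2, hy⟩) ∈
          matSupport v from this)
        simpa [Tube, Subtype.edist_eq] using this
      · exact absurd hp (by simp [matSupport, extendMat, hx, hy])
    · exact absurd hp (by simp [matSupport, extendMat, hx])

lemma restrictMat_extendMat (v : {y : X // edist x₀ y < ⊤} → {y : X // edist x₀ y < ⊤} → ℂ) :
    restrictMat x₀ (extendMat x₀ v) = v := by
  funext a b
  simp [restrictMat, extendMat, a.2, b.2]

lemma invariant_eq (σ : ({y : X // edist x₀ y < ⊤} → {y : X // edist x₀ y < ⊤} → ℂ) →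
    (H →L[ℂ] H)) :
    invariantSubmodule (fun T : X → X → ℂ => σ (restrictMat x₀ T)) =
      invariantSubmodule σ := by
  apply SetLike.ext
  intro ξ
  constructor
  · intro hξ v₀ hv₀
    have h := hξ (extendMat x₀ v₀) (isPT_extend x₀ hv₀)
    have hre : restrictMat x₀ (matMul (extendMat x₀ v₀) (matStar (extendMat x₀ v₀))) =
        matMul v₀ (matStar v₀) := by
      funext a b
      calc restrictMat x₀ (matMul (extendMat x₀ v₀) (matStar (extendMat x₀ v₀))) a b
          = matMul (extendMat x₀ v₀) (matStar (extendMat x₀ v₀)) a.1 b.1 := rfl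
        _ = matMul (restrictMat x₀ (extendMat x₀ v₀))
              (restrictMat x₀ (matStar (extendMat x₀ v₀))) a b :=
            (matMul_restrictMat x₀ (isPT_extend x₀ hv₀).2.2.2 a b).symm
        _ = matMul v₀ (matStar v₀) a b := by
            rw [restrictMat_matStar, restrictMat_extendMat]
    have h' : σ (restrictMat x₀ (extendMat x₀ v₀)) ξ =
        σ (restrictMat x₀ (matMul (extendMat x₀ v₀) (matStar (extendMat x₀ v₀)))) ξ := h
    rw [restrictMat_extendMat, hre] at h'
    exact h'
  · intro hξ v hv
    have h := hξ (restrictMat x₀ v) (isPT_restrict x₀ hv)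
    have hre : restrictMat x₀ (matMul v (matStar v)) =
        matMul (restrictMat x₀ v) (matStar (restrictMat x₀ v)) := by
      funext a b
      rw [← restrictMat_matStar]
      exact (matMul_restrictMat x₀ hv.2.2.2 a b).symm
    show σ (restrictMat x₀ v) ξ = σ (restrictMat x₀ (matMul v (matStar v))) ξ
    rw [hre]
    exact h

end Restriction

/-- If `P_k ∈ ℂ_u[X]` approximate the Kazhdan projection uniformly
over all representations of `ℂ_u[X]` with errors `ε_k`, then their restrictions
`Q(P_k)` to a coarse component `X₀` approximate the Kazhdan projection uniformly
over all representations of `ℂ_u[X₀]` with the same errors. -/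
theorem statement14 {X : Type*} [EMetricSpace X] (hX : IsSpace X) (x₀ : X)
    (P : ℕ → X → X → ℂ) (hP : ∀ k, CuElem (P k)) (ε : ℕ → ℝ) (hε : ∀ k, 0 ≤ ε k)
    (hbound : ∀ (H : Type) [NormedAddCommGroup H] [InnerProductSpace ℂ H] [CompleteSpace H]
      (π : (X → X → ℂ) → (H →L[ℂ] H)), IsRepresentation π →
      ∀ p : H →L[ℂ] H, IsOrthoProjOnto p (invariantSubmodule π) →
        ∀ k : ℕ, ‖π (P k) - p‖ ≤ ε k) :
    ∀ (H : Type) [NormedAddCommGroup H] [InnerProductSpace ℂ H] [CompleteSpace H]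
      (σ : ({y : X // edist x₀ y < ⊤} → {y : X // edist x₀ y < ⊤} → ℂ) → (H →L[ℂ] H)),
      IsRepresentation σ →
      ∀ p : H →L[ℂ] H, IsOrthoProjOnto p (invariantSubmodule σ) →
        ∀ k : ℕ, ‖σ (fun a b => P k a.1 b.1) - p‖ ≤ ε k := by
  intro H _ _ _ σ hσ p hp k
  have hπ : IsRepresentation (fun T : X → X → ℂ => σ (restrictMat x₀ T)) :=
    isRep_restrict x₀ σ hσ
  have hp' : IsOrthoProjOnto p (invariantSubmodule
      (fun T : X → X → ℂ => σ (restrictMat x₀ T))) := by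
    rw [invariant_eq x₀ σ]
    exact hp
  have := hbound H (fun T : X → X → ℂ => σ (restrictMat x₀ T)) hπ p hp' k
  exact this

end GeomPropT
end
end
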